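/- arXiv:2003.06367 — 8 statements merged into one kernel-verified Lean document; each statement's English description precedes it below -/
import Mathlib

section
/- Let K be a field of characteristic zero and let U = Σ_{n≥1} u_n t^n and V = Σ_{n≥1} v_n t^n be formal power series over K with u_1 ≠ 0 and v_1 ≠ 0. Then the differential equation U · (z')² = V ∘ z admits a unique nonzero solution z in t·K⟦t⟧. -/
open PowerSeries

/-- Composition `V ∘ z` of formal power series, valid when `z` has zero constant term. -/
noncomputable def PowerSeries.compSeries {K : Type*} [CommRing K] (V z : PowerSeries K) :
    PowerSeries K :=
  PowerSeries.mk fun n => ∑ k ∈ Finset.range (n + 1),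
    (PowerSeries.coeff k V) * (PowerSeries.coeff n (z ^ k))

namespace ODEAux

variable {K : Type*} [Field K]

lemma coeff_compSeries (V z : PowerSeries K) (n : ℕ) :
    coeff n (V.compSeries z)
      = ∑ k ∈ Finset.range (n + 1), coeff k V * coeff n (z ^ k) := by
  simp [PowerSeries.compSeries]

/-- coefficient of a product where the right factor vanishes below `n - 1`. -/
lemma coeff_mul_low (A E : PowerSeries K) (n : ℕ) (hn : 1 ≤ n)
    (hE : ∀ k, k + 1 < n → coeff k E = 0) :
    coeff n (A * E)
      = constantCoeff A * coeff n E + coeff 1 A * coeff (n - 1) E := by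
  rw [PowerSeries.coeff_mul, Finset.Nat.sum_antidiagonal_eq_sum_range_succ_mk]
  have h2 : 2 ≤ n + 1 := by omega
  rw [Finset.range_eq_Ico, ← Finset.sum_Ico_consecutive _ (Nat.zero_le 2) h2]
  have htail : ∑ a ∈ Finset.Ico 2 (n + 1), coeff a A * coeff (n - a) E = 0 := by
    apply Finset.sum_eq_zero
    intro a ha
    simp only [Finset.mem_Ico] at ha
    rw [hE (n - a) (by omega), mul_zero]
  rw [htail, add_zero]
  rw [show Finset.Ico 0 2 = {0, 1} by decide]
  rw [Finset.sum_insert (by decide), Finset.sum_singleton]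
  simp [PowerSeries.coeff_zero_eq_constantCoeff]

/-- coefficient of a product where the left factor vanishes below `n`. -/
lemma coeff_low_mul (D S : PowerSeries K) (n : ℕ) (hD : ∀ k < n, coeff k D = 0) :
    coeff n (D * S) = coeff n D * constantCoeff S := by
  rw [PowerSeries.coeff_mul]
  rw [Finset.sum_eq_single (n, 0)]
  · simp [PowerSeries.coeff_zero_eq_constantCoeff]
  · rintro ⟨a, b⟩ hab hne
    replace hab : a + b = n := by simpa using hab
    have ha : a < n := by
      rcases Nat.lt_or_ge a n with h | h
      · exact h
      · exfalso; apply hne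
        have : a = n := by omega
        subst this
        simp only [Prod.mk.injEq, true_and]
        omega
    rw [hD a ha, zero_mul]
  · intro h
    exfalso; exact h (by simp)

/-- The RHS difference formula. -/
lemma rhs_sub (V z w : PowerSeries K)
    (hz0 : constantCoeff z = 0) (hw0 : constantCoeff w = 0)
    (n : ℕ) (hn : 1 ≤ n) (hag : ∀ k < n, coeff k z = coeff k w) :
    coeff n (V.compSeries z) - coeff n (V.compSeries w)
      = coeff 1 V * (coeff n z - coeff n w) := by
  rw [coeff_compSeries, coeff_compSeries, ← Finset.sum_sub_distrib]
  have key : ∀ k ∈ Finset.range (n + 1),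
      coeff k V * coeff n (z ^ k) - coeff k V * coeff n (w ^ k)
        = coeff k V * ((coeff n z - coeff n w)
            * constantCoeff (∑ i ∈ Finset.range k, z ^ i * w ^ (k - 1 - i))) := by
    intro k _
    rw [← mul_sub, ← map_sub]
    congr 1
    have hgeom : z ^ k - w ^ k
        = (z - w) * ∑ i ∈ Finset.range k, z ^ i * w ^ (k - 1 - i) := by
      rw [mul_comm, geom_sum₂_mul]
    rw [hgeom, coeff_low_mul _ _ n (fun k hk => by rw [map_sub, hag k hk, sub_self]),
      map_sub]
  rw [Finset.sum_congr rfl key]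
  rw [Finset.sum_eq_single 1]
  · simp
  · intro k hk hne
    rcases Nat.eq_zero_or_pos k with rfl | hk1
    · simp
    · have hk2 : 2 ≤ k := by omega
      have hc0 : constantCoeff (∑ i ∈ Finset.range k, z ^ i * w ^ (k - 1 - i)) = 0 := by
        rw [map_sum]
        apply Finset.sum_eq_zero
        intro i hi
        simp only [Finset.mem_range] at hi
        rw [map_mul, map_pow, map_pow, hz0, hw0]
        rcases Nat.eq_zero_or_pos i with rfl | hipos
        · rw [pow_zero, one_mul, zero_pow (by omega)]
        · rw [zero_pow (by omega), zero_mul]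
      rw [hc0, mul_zero, mul_zero]
  · intro h
    exfalso; exact h (by simp [Finset.mem_range]; omega)

/-- The LHS difference formula. -/
lemma lhs_sub (U z w : PowerSeries K) (hU0 : constantCoeff U = 0)
    (n : ℕ) (hn : 1 ≤ n) (hag : ∀ k < n, coeff k z = coeff k w) :
    coeff n (U * (d⁄dX K z) ^ 2) - coeff n (U * (d⁄dX K w) ^ 2)
      = (n : K) * coeff 1 U * (coeff 1 z + coeff 1 w)
          * (coeff n z - coeff n w) := by
  have hfact : U * (d⁄dX K z) ^ 2 - U * (d⁄dX K w) ^ 2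
      = (U * (d⁄dX K z + d⁄dX K w)) * (d⁄dX K z - d⁄dX K w) := by ring
  rw [← map_sub, hfact]
  have hE : ∀ k, k + 1 < n → coeff k (d⁄dX K z - d⁄dX K w) = 0 := by
    intro k hk
    rw [map_sub, PowerSeries.coeff_derivative, PowerSeries.coeff_derivative,
      hag (k + 1) hk, sub_self]
  rw [coeff_mul_low _ _ n hn hE]
  have hA0 : constantCoeff (U * (d⁄dX K z + d⁄dX K w)) = 0 := by
    rw [map_mul, hU0, zero_mul]
  have hA1 : coeff 1 (U * (d⁄dX K z + d⁄dX K w))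
      = coeff 1 U * (coeff 1 z + coeff 1 w) := by
    rw [coeff_mul_low _ _ 1 le_rfl (fun k hk => by omega)]
    rw [hU0, zero_mul, zero_add, show (1 : ℕ) - 1 = 0 from rfl, map_add,
      PowerSeries.coeff_derivative, PowerSeries.coeff_derivative]
    norm_num
  have hEn : coeff (n - 1) (d⁄dX K z - d⁄dX K w)
      = (n : K) * (coeff n z - coeff n w) := by
    obtain ⟨m, rfl⟩ : ∃ m, n = m + 1 := ⟨n - 1, by omega⟩
    rw [show m + 1 - 1 = m by omega, map_sub, PowerSeries.coeff_derivative,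
      PowerSeries.coeff_derivative]
    push_cast
    ring
  rw [hA0, hA1, hEn, zero_mul, zero_add]
  ring

lemma coeff_zero_lhs (U z : PowerSeries K) (hU0 : constantCoeff U = 0) :
    coeff 0 (U * (d⁄dX K z) ^ 2) = 0 := by
  rw [PowerSeries.coeff_zero_eq_constantCoeff, map_mul, hU0, zero_mul]

lemma coeff_zero_rhs (V z : PowerSeries K) (hV0 : constantCoeff V = 0) :
    coeff 0 (V.compSeries z) = 0 := by
  rw [coeff_compSeries]
  simp [PowerSeries.coeff_zero_eq_constantCoeff, hV0]

lemma coeff_one_lhs (U z : PowerSeries K) (hU0 : constantCoeff U = 0) :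
    coeff 1 (U * (d⁄dX K z) ^ 2) = coeff 1 U * (coeff 1 z) ^ 2 := by
  rw [coeff_mul_low _ _ 1 le_rfl (fun k hk => by omega), hU0, zero_mul, zero_add,
    show (1 : ℕ) - 1 = 0 from rfl, PowerSeries.coeff_zero_eq_constantCoeff, map_pow]
  have : constantCoeff (d⁄dX K z) = coeff 1 z := by
    rw [← PowerSeries.coeff_zero_eq_constantCoeff, PowerSeries.coeff_derivative]
    norm_num
  rw [this]

lemma coeff_one_rhs (V z : PowerSeries K) :
    coeff 1 (V.compSeries z) = coeff 1 V * coeff 1 z := by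
  rw [coeff_compSeries]
  rw [Finset.sum_range_succ, Finset.sum_range_one]
  simp

lemma comp_zero (V : PowerSeries K) (hV0 : constantCoeff V = 0) :
    V.compSeries 0 = 0 := by
  ext n
  rw [coeff_compSeries, map_zero]
  apply Finset.sum_eq_zero
  intro k _
  rcases Nat.eq_zero_or_pos k with rfl | hk
  · rw [show coeff 0 V = 0 from by
      rw [PowerSeries.coeff_zero_eq_constantCoeff]; exact hV0, zero_mul]
  · rw [zero_pow (by omega), map_zero, mul_zero]

/-- Uniqueness: two solutions with the same linear coefficient coincide. -/
lemma sol_unique (U V : PowerSeries K)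
    (hU0 : constantCoeff U = 0) (hU1 : coeff 1 U ≠ 0)
    (hV0 : constantCoeff V = 0) (hV1 : coeff 1 V ≠ 0)
    (hK : ∀ n : ℕ, 1 ≤ n → (2 * (n : K) - 1) ≠ 0)
    (z w : PowerSeries K)
    (hz0 : constantCoeff z = 0) (hw0 : constantCoeff w = 0)
    (hz : U * (d⁄dX K z) ^ 2 = V.compSeries z)
    (hw : U * (d⁄dX K w) ^ 2 = V.compSeries w)
    (h1 : coeff 1 z = coeff 1 w) : z = w := by
  ext n
  induction n using Nat.strong_induction_on with
  | _ n ih =>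
    match n, ih with
    | 0, _ => rw [PowerSeries.coeff_zero_eq_constantCoeff, hz0, hw0]
    | 1, _ => exact h1
    | (m + 2), ih =>
      set n := m + 2 with hn
      have hag : ∀ k < n, coeff k z = coeff k w := fun k hk => ih k hk
      have e1 := lhs_sub U z w hU0 n (by omega) hag
      have e2 := rhs_sub V z w hz0 hw0 n (by omega) hag
      rw [hz, hw, e2] at e1
      -- e1 : v1 * d = n * u1 * (z1 + w1) * d
      have h1eq : coeff 1 U * (coeff 1 z) ^ 2 = coeff 1 V * coeff 1 z := by
        have := congrArg (coeff 1) hz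
        rwa [coeff_one_lhs U z hU0, coeff_one_rhs] at this
      by_contra hne
      have hd : coeff n z - coeff n w ≠ 0 := sub_ne_zero_of_ne hne
      have hfac : (coeff 1 V - (n : K) * coeff 1 U * (coeff 1 z + coeff 1 w))
          * (coeff n z - coeff n w) = 0 := by linear_combination e1
      have hmain : coeff 1 V = (n : K) * coeff 1 U * (coeff 1 z + coeff 1 w) := by
        rcases mul_eq_zero.mp hfac with h | h
        · exact sub_eq_zero.mp h
        · exact absurd h hd
      rw [← h1] at hmain
      rcases eq_or_ne (coeff 1 z) 0 with hz1 | hz1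
      · rw [hz1] at hmain
        simp at hmain
        exact hV1 hmain
      · have hfac2 : (coeff 1 U * coeff 1 z - coeff 1 V) * coeff 1 z = 0 := by
          linear_combination h1eq
        have hu : coeff 1 U * coeff 1 z = coeff 1 V := by
          rcases mul_eq_zero.mp hfac2 with h | h
          · exact sub_eq_zero.mp h
          · exact absurd h hz1
        have h2n : (2 * (n : K) - 1) * coeff 1 V = 0 := by
          linear_combination -hmain - 2 * (n : K) * hu
        rcases mul_eq_zero.mp h2n with h | h
        · exact hK n (by omega) h
        · exact hV1 h

variable (U V : PowerSeries K)

noncomputable def solC : ℕ → K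
  | 0 => 0
  | 1 => coeff 1 V / coeff 1 U
  | (n + 2) =>
    let w : PowerSeries K :=
      (PowerSeries.mk fun k => if _ : k < n + 2 then solC k else 0);
    -(coeff (n + 2) (U * (d⁄dX K w) ^ 2) - coeff (n + 2) (V.compSeries w))
      / ((2 * ((n : K) + 2) - 1) * coeff 1 V)
termination_by n => n

end ODEAux

open ODEAux in
/-- If `U` and `V` are formal power series of `t`-adic valuation `1` over a field of
characteristic zero, the differential equation `U · (z')² = V ∘ z` has a unique nonzero
solution `z ∈ t·K⟦t⟧`. -/
theorem existsUnique_nonzero_solution {K : Type*} [Field K] [CharZero K]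
    (U V : PowerSeries K)
    (hU0 : constantCoeff U = 0) (hU1 : coeff 1 U ≠ 0)
    (hV0 : constantCoeff V = 0) (hV1 : coeff 1 V ≠ 0) :
    ∃! z : PowerSeries K, z ≠ 0 ∧ constantCoeff z = 0 ∧
      U * (d⁄dX K z) ^ 2 = V.compSeries z := by
  have hK : ∀ n : ℕ, 1 ≤ n → (2 * (n : K) - 1) ≠ 0 := by
    intro n hn h
    have : ((2 * n : ℕ) : K) = ((1 : ℕ) : K) := by push_cast; linear_combination h
    have := Nat.cast_injective this
    omega
  set c : ℕ → K := solC U V with hc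
  set z : PowerSeries K := PowerSeries.mk c with hzdef
  have hcoeffz : ∀ k, coeff k z = c k := fun k => PowerSeries.coeff_mk k c
  have hc0 : c 0 = 0 := by rw [hc, solC]
  have hz0 : constantCoeff z = 0 := by
    rw [← PowerSeries.coeff_zero_eq_constantCoeff, hcoeffz, hc0]
  have hc1 : c 1 = coeff 1 V / coeff 1 U := by rw [hc, solC]
  have hz1 : coeff 1 z = coeff 1 V / coeff 1 U := by rw [hcoeffz, hc1]
  have hz1ne : coeff 1 z ≠ 0 := by
    rw [hz1]; exact div_ne_zero hV1 hU1
  have hzne : z ≠ 0 := fun h => hz1ne (by rw [h, map_zero])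
  -- z satisfies the equation
  have heq : U * (d⁄dX K z) ^ 2 = V.compSeries z := by
    ext n
    match n with
    | 0 => rw [coeff_zero_lhs U z hU0, coeff_zero_rhs V z hV0]
    | 1 =>
      rw [coeff_one_lhs U z hU0, coeff_one_rhs, hz1]
      field_simp
    | (m + 2) =>
      set n := m + 2 with hn
      set w : PowerSeries K :=
        PowerSeries.mk fun k => if _ : k < n then c k else 0 with hwdef
      have hcoeffw : ∀ k, coeff k w = if k < n then c k else 0 := by
        intro k
        rw [hwdef, PowerSeries.coeff_mk]
        split <;> simp_all
      have hw0 : constantCoeff w = 0 := by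
        rw [← PowerSeries.coeff_zero_eq_constantCoeff, hcoeffw, if_pos (by omega), hc0]
      have hag : ∀ k < n, coeff k z = coeff k w := by
        intro k hk
        rw [hcoeffz, hcoeffw, if_pos hk]
      have hcn : c n = -(coeff n (U * (d⁄dX K w) ^ 2) - coeff n (V.compSeries w))
          / ((2 * ((m : K) + 2) - 1) * coeff 1 V) := by
        rw [hc]
        rw [hn, solC]
      have e1 := lhs_sub U z w hU0 n (by omega) hag
      have e2 := rhs_sub V z w hz0 hw0 n (by omega) hag
      have hw1 : coeff 1 w = coeff 1 V / coeff 1 U := by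
        rw [hcoeffw, if_pos (by omega), hc1]
      have hwn : coeff n w = 0 := by rw [hcoeffw, if_neg (by omega)]
      have hzn : coeff n z = c n := hcoeffz n
      rw [hz1, hw1, hwn, hzn, sub_zero] at e1
      rw [hwn, hzn, sub_zero] at e2
      have hnK : ((n : ℕ) : K) = (m : K) + 2 := by rw [hn]; push_cast; ring
      have h2n1 : (2 * ((m : K) + 2) - 1) ≠ 0 := by
        have := hK n (by omega)
        rwa [hnK] at this
      have key : (n : K) * coeff 1 U
            * (coeff 1 V / coeff 1 U + coeff 1 V / coeff 1 U) * c n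
            - coeff 1 V * c n
          = -(coeff n (U * (d⁄dX K w) ^ 2) - coeff n (V.compSeries w)) := by
        rw [hcn, hnK]
        field_simp
        ring
      linear_combination e1 - e2 + key
  refine ⟨z, ⟨hzne, hz0, heq⟩, ?_⟩
  rintro y ⟨hyne, hy0, hyeq⟩
  -- first, coeff 1 y ≠ 0
  have hy1ne : coeff 1 y ≠ 0 := by
    intro hy1
    apply hyne
    apply sol_unique U V hU0 hU1 hV0 hV1 hK y 0 hy0 (by rw [map_zero]) hyeq ?_ ?_
    · rw [comp_zero V hV0]
      simp
    · rw [hy1, map_zero]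
  have hy1eq : coeff 1 U * (coeff 1 y) ^ 2 = coeff 1 V * coeff 1 y := by
    have := congrArg (coeff 1) hyeq
    rwa [coeff_one_lhs U y hU0, coeff_one_rhs] at this
  have hy1 : coeff 1 y = coeff 1 V / coeff 1 U := by
    have hfac : (coeff 1 U * coeff 1 y - coeff 1 V) * coeff 1 y = 0 := by
      linear_combination hy1eq
    rcases mul_eq_zero.mp hfac with h | h
    · rw [eq_div_iff hU1]
      linear_combination sub_eq_zero.mp h
    · exact absurd h hy1ne
  exact sol_unique U V hU0 hU1 hV0 hV1 hK y z hy0 hz0 hyeq heq (by rw [hy1, hz1])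
end

section
/- Let K be a finite extension of ℚ₂, a ∈ O_K^×, f = Σ f_i t^i ∈ K⟦t⟧, and let y = Σ y_i t^i be the unique solution of t(t−4a)·y' + (t−2a)·y = f. Then for every i ≥ 0, v_2(y_i) ≥ min_{0 ≤ k ≤ i} v_2(f_k) − ⌊log_2(i+1)⌋ − 1. -/
open PowerSeries

section Aux

lemma pow_sum_digits_le (n : ℕ) : 2 ^ ((Nat.digits 2 n).sum) ≤ n + 1 := by
  induction n using Nat.strong_induction_on with
  | _ n ih =>
    rcases Nat.eq_zero_or_pos n with h | h
    · simp [h]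
    · rw [Nat.digits_def' (by norm_num : 1 < 2) h]
      have h2 : n / 2 < n := Nat.div_lt_self h (by norm_num)
      have := ih (n / 2) h2
      have heq := Nat.div_add_mod n 2
      simp only [List.sum_cons]
      rcases Nat.mod_two_eq_zero_or_one n with h0 | h0 <;> rw [h0] <;>
        [skip; rw [pow_add]] <;> simp <;> omega

lemma sum_digits_le_log (n : ℕ) : (Nat.digits 2 n).sum ≤ Nat.log 2 (n + 1) := by
  rw [Nat.le_log_iff_pow_le (by norm_num) (by omega)]
  exact pow_sum_digits_le n

lemma digit_identity (n : ℕ) :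
    (Nat.digits 2 (n+1)).sum + padicValNat 2 (n+1) = (Nat.digits 2 n).sum + 1 := by
  have h1 := @sub_one_mul_padicValNat_factorial 2 ⟨Nat.prime_two⟩ (n+1)
  have h2 := @sub_one_mul_padicValNat_factorial 2 ⟨Nat.prime_two⟩ n
  have h3 : padicValNat 2 ((n+1).factorial) =
      padicValNat 2 (n+1) + padicValNat 2 (n.factorial) := by
    rw [Nat.factorial_succ, padicValNat.mul (by omega) (Nat.factorial_ne_zero n)]
  have h4 : (Nat.digits 2 (n+1)).sum ≤ n + 1 := Nat.digit_sum_le 2 (n+1)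
  have h5 : (Nat.digits 2 n).sum ≤ n := Nat.digit_sum_le 2 n
  omega

variable {K : Type*} [Field K] (v : AddValuation K (WithTop ℚ)) (hv2 : v 2 = (1 : ℚ))

lemma v_nat_nonneg (n : ℕ) : (0 : WithTop ℚ) ≤ v (n : K) := by
  induction n with
  | zero => simp [v.map_zero]
  | succ n ih =>
    push_cast
    refine v.map_le_add ih ?_
    rw [v.map_one]

include hv2 in
lemma v_odd (n : ℕ) : v ((2 * n + 1 : ℕ) : K) = 0 := by
  have h2n : (1 : WithTop ℚ) ≤ v ((2 * n : ℕ) : K) := by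
    push_cast
    rw [v.map_mul, hv2]
    exact le_add_of_nonneg_right (v_nat_nonneg v n)
  have h2npos : (0 : WithTop ℚ) < v ((2 * n : ℕ) : K) := lt_of_lt_of_le (by norm_num) h2n
  have hge : (0 : WithTop ℚ) ≤ v ((2 * n + 1 : ℕ) : K) := by
    push_cast
    exact v.map_le_add (le_of_lt (by push_cast at h2npos; exact h2npos)) (le_of_eq v.map_one.symm)
  rcases lt_or_ge (0 : WithTop ℚ) (v ((2 * n + 1 : ℕ) : K)) with h | h
  · exfalso
    have : (0 : WithTop ℚ) < v (((2 * n + 1 : ℕ) : K) - ((2 * n : ℕ) : K)) :=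
      lt_of_lt_of_le (lt_min h h2npos) (v.map_sub _ _)
    have heq : ((2 * n + 1 : ℕ) : K) - ((2 * n : ℕ) : K) = 1 := by push_cast; ring
    rw [heq, v.map_one] at this
    exact lt_irrefl _ this
  · exact le_antisymm h hge

include hv2 in
lemma v_nat_ge (n : ℕ) : ((padicValNat 2 (n+1) : ℚ) : WithTop ℚ) ≤ v ((n + 1 : ℕ) : K) := by
  set e := padicValNat 2 (n+1) with he
  obtain ⟨m, hm⟩ : 2 ^ e ∣ (n + 1) := pow_padicValNat_dvd
  have hmodd : ¬ 2 ∣ m := by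
    intro ⟨c, hc⟩
    have : 2 ^ (e + 1) ∣ (n + 1) := ⟨c, by rw [hm, hc]; ring⟩
    exact pow_succ_padicValNat_not_dvd (by omega) this
  obtain ⟨j, hj⟩ : ∃ j, m = 2 * j + 1 := ⟨m / 2, by omega⟩
  have hvpow : v ((2 : K) ^ e) = ((e : ℚ) : WithTop ℚ) := by
    induction e with
    | zero => simp [v.map_one]
    | succ e ih =>
      rw [pow_succ, v.map_mul, ih, hv2]
      norm_cast
  rw [hm]
  have hc : ((2 ^ e * m : ℕ) : K) = (2 : K) ^ e * ((m : ℕ) : K) := by push_cast; ring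
  rw [hc, v.map_mul, hvpow, hj, v_odd v hv2 j, add_zero]

variable (a : K) (f y : PowerSeries K)
  (hy : X * (X - C (4 * a)) * d⁄dX K y + (X - C (2 * a)) * y = f)

lemma coeff_X_mul_eq (g : PowerSeries K) (n : ℕ) :
    coeff n (X * g) = if n = 0 then 0 else coeff (n - 1) g := by
  cases n with
  | zero => simp
  | succ n => simp [coeff_succ_X_mul]

include hy in
lemma rec0 : coeff 0 f = -(2 * a * coeff 0 y) := by
  have h := congrArg (coeff 0) hy
  rw [map_add] at h
  rw [show X * (X - C (4 * a)) * d⁄dX K y = X * ((X - C (4 * a)) * d⁄dX K y) by ring] at h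
  rw [coeff_X_mul_eq, if_pos rfl] at h
  rw [sub_mul, map_sub, coeff_X_mul_eq, if_pos rfl] at h
  simp only [coeff_C_mul] at h
  rw [← h]
  simp [coeff_zero_eq_constantCoeff]

include hy in
lemma recS (n : ℕ) : coeff (n + 1) f =
    ((n : K) + 1) * coeff n y - 2 * a * (2 * ((n : K) + 1) + 1) * coeff (n + 1) y := by
  have h := congrArg (coeff (n + 1)) hy
  rw [map_add] at h
  rw [show X * (X - C (4 * a)) * d⁄dX K y = X * ((X - C (4 * a)) * d⁄dX K y) by ring] at h
  rw [coeff_succ_X_mul] at h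
  rw [sub_mul, map_sub] at h
  rw [sub_mul, map_sub, coeff_succ_X_mul] at h
  simp only [coeff_C_mul] at h
  rw [coeff_X_mul_eq] at h
  rw [coeff_derivative, coeff_derivative] at h
  rw [← h]
  cases n with
  | zero => simp; ring_nf
  | succ m =>
    simp only [if_neg (Nat.succ_ne_zero m), Nat.succ_sub_one]
    push_cast
    ring

end Aux

/-- Valuation estimate for the solution of `t(t-4a)y' + (t-2a)y = f`:
`v₂(yᵢ) ≥ min_{0 ≤ k ≤ i} v₂(f_k) - ⌊log₂(i+1)⌋ - 1`. -/
theorem linear_ode_plus_valuation_bound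
    {K : Type*} [Field K] [Algebra ℚ_[2] K] [FiniteDimensional ℚ_[2] K]
    (v : AddValuation K (WithTop ℚ)) (hv2 : v 2 = (1 : ℚ)) (a : K) (ha : v a = (0 : ℚ))
    (f y : PowerSeries K)
    (hy : X * (X - C (4 * a)) * d⁄dX K y + (X - C (2 * a)) * y = f) :
    ∀ i : ℕ,
      (Finset.range (i + 1)).inf (fun k => v (coeff k f)) ≤
        v (coeff i y) + (((Nat.log 2 (i + 1) : ℚ) + 1 : ℚ) : WithTop ℚ) := by
  have main : ∀ i : ℕ,
      (Finset.range (i + 1)).inf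
          (fun k => v (coeff k f) + (((Nat.digits 2 k).sum : ℚ) : WithTop ℚ)) ≤
        v (coeff i y) + ((((Nat.digits 2 i).sum : ℚ) : WithTop ℚ) + 1) := by
    intro i
    induction i with
    | zero =>
      rw [Finset.range_one, Finset.inf_singleton]
      have h0 := rec0 a f y hy
      have : v (coeff 0 f) = v (coeff 0 y) + 1 := by
        rw [h0, v.map_neg, v.map_mul, v.map_mul, hv2, ha]
        push_cast
        rw [add_zero, add_comm]
      rw [show (((Nat.digits 2 0).sum : ℚ) : WithTop ℚ) = 0 by norm_num, add_zero, zero_add]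
      exact le_of_eq this
    | succ n ih =>
      have hrec := recS a f y hy n
      -- rearranged recurrence
      have hre : 2 * a * (2 * ((n : K) + 1) + 1) * coeff (n + 1) y =
          ((n : K) + 1) * coeff n y - coeff (n + 1) f := by
        rw [hrec]; ring
      have hoddcast : (2 * ((n : K) + 1) + 1) = ((2 * (n + 1) + 1 : ℕ) : K) := by push_cast; ring
      have hval : v (coeff (n + 1) y) + 1 =
          v (((n : K) + 1) * coeff n y - coeff (n + 1) f) := by
        rw [← hre, v.map_mul, v.map_mul, v.map_mul, hv2, ha, hoddcast, v_odd v hv2]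
        push_cast
        rw [add_zero, add_zero, add_comm]
      have hmin : min (v (((n : K) + 1) * coeff n y)) (v (coeff (n + 1) f)) ≤
          v (((n : K) + 1) * coeff n y - coeff (n + 1) f) := v.map_sub _ _
      -- rewrite goal RHS
      have hgoal : v (coeff (n + 1) y) + ((((Nat.digits 2 (n + 1)).sum : ℚ) : WithTop ℚ) + 1)
          = v (((n : K) + 1) * coeff n y - coeff (n + 1) f)
            + (((Nat.digits 2 (n + 1)).sum : ℚ) : WithTop ℚ) := by
        rw [← hval]; abel
      rw [hgoal]
      refine le_trans (le_min ?_ ?_)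
        (add_le_add_left hmin (((Nat.digits 2 (n + 1)).sum : ℚ) : WithTop ℚ) |>.trans_eq' (by
          rw [min_add_add_right]))
      · -- inf ≤ v((n+1) * y_n) + s(n+1)
        have hncast : ((n : K) + 1) = ((n + 1 : ℕ) : K) := by push_cast; ring
        have hv_n1 : ((padicValNat 2 (n + 1) : ℚ) : WithTop ℚ) ≤ v ((n : K) + 1) := by
          rw [hncast]; exact v_nat_ge v hv2 n
        have hsub : Finset.range (n + 1) ⊆ Finset.range (n + 2) :=
          Finset.range_subset_range.mpr (by omega)
        have hmono := Finset.inf_mono (f := fun k =>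
          v (coeff k f) + (((Nat.digits 2 k).sum : ℚ) : WithTop ℚ)) hsub
        refine le_trans hmono (le_trans ih ?_)
        have hdig : (((Nat.digits 2 n).sum : ℚ) : WithTop ℚ) + 1 =
            ((padicValNat 2 (n + 1) : ℚ) : WithTop ℚ)
              + (((Nat.digits 2 (n + 1)).sum : ℚ) : WithTop ℚ) := by
          have := digit_identity n
          norm_cast
          omega
        rw [hdig, v.map_mul]
        calc v (coeff n y) + (((padicValNat 2 (n + 1) : ℚ) : WithTop ℚ)
              + (((Nat.digits 2 (n + 1)).sum : ℚ) : WithTop ℚ))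
            ≤ v (coeff n y) + (v ((n : K) + 1)
              + (((Nat.digits 2 (n + 1)).sum : ℚ) : WithTop ℚ)) := by
              exact add_le_add_right (add_le_add_left hv_n1 _) _
          _ = v ((n : K) + 1) + v (coeff n y)
              + (((Nat.digits 2 (n + 1)).sum : ℚ) : WithTop ℚ) := by abel
      · -- inf ≤ v f_{n+1} + s(n+1)
        exact Finset.inf_le (Finset.self_mem_range_succ (n + 1))
  intro i
  calc (Finset.range (i + 1)).inf (fun k => v (coeff k f))
      ≤ (Finset.range (i + 1)).inf
          (fun k => v (coeff k f) + (((Nat.digits 2 k).sum : ℚ) : WithTop ℚ)) := by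
        refine Finset.inf_mono_fun fun b _ => le_add_of_nonneg_right ?_
        exact_mod_cast (Nat.cast_nonneg ((Nat.digits 2 b).sum) : (0:ℚ) ≤ _)
    _ ≤ v (coeff i y) + ((((Nat.digits 2 i).sum : ℚ) : WithTop ℚ) + 1) := main i
    _ ≤ v (coeff i y) + (((Nat.log 2 (i + 1) : ℚ) + 1 : ℚ) : WithTop ℚ) := by
        refine add_le_add_right ?_ _
        have := sum_digits_le_log i
        rw [show ((((Nat.log 2 (i + 1) : ℚ) + 1 : ℚ)) : WithTop ℚ) =
          ((Nat.log 2 (i+1) : ℚ) : WithTop ℚ) + 1 by push_cast; ring]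
        exact add_le_add_left (by exact_mod_cast this) 1
end

section
/- Let K be a finite extension of ℚ₂, a ∈ O_K^×, f = Σ f_i t^i ∈ K⟦t⟧, and let y = Σ y_i t^i be the unique solution of t(t−4a)·y' − (t−2a)·y = f. Then v_2(y_0) = v_2(f_0) − 1, v_2(y_1) ≥ min(v_2(f_0) − 2, v_2(f_1) − 1), and for i ≥ 2, v_2(y_i) ≥ min_{2 ≤ k ≤ i} v_2(f_k) − ⌊log_2(i−1)⌋ − 1. -/
open PowerSeries

private def s2 (m : ℕ) : ℕ := (Nat.digits 2 m).sum

private lemma s2_two_mul (q : ℕ) : s2 (2*q) = s2 q := by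
  rcases Nat.eq_zero_or_pos q with h | h
  · simp [h, s2]
  · unfold s2
    rw [Nat.digits_def' (by norm_num) (by omega), Nat.mul_mod_right,
      Nat.mul_div_cancel_left _ (by norm_num : 0 < 2)]
    simp

private lemma s2_odd (q : ℕ) : s2 (2*q+1) = s2 q + 1 := by
  unfold s2
  rw [Nat.digits_def' (by norm_num) (by omega),
    show (2*q+1) % 2 = 1 by omega, show (2*q+1)/2 = q by omega]
  simp [Nat.add_comm]

private lemma s2_succ_add_val (n : ℕ) : s2 (n+1) + padicValNat 2 (n+1) = s2 n + 1 := by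
  induction n using Nat.strong_induction_on with
  | _ n ih =>
    rcases Nat.even_or_odd (n+1) with ⟨q, hq⟩ | ⟨q, hq⟩
    · have hq1 : 1 ≤ q := by omega
      have e1 : s2 (n+1) = s2 q := by rw [show n+1 = 2*q by omega, s2_two_mul]
      have e2 : padicValNat 2 (n+1) = padicValNat 2 q + 1 := by
        rw [show n+1 = 2*q by omega, padicValNat.mul (by norm_num) (by omega)]
        simp [padicValNat.self]
        omega
      have e3 : s2 n = s2 (q-1) + 1 := by rw [show n = 2*(q-1)+1 by omega, s2_odd]
      have ihq := ih (q-1) (by omega)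
      rw [show q-1+1 = q by omega] at ihq
      omega
    · have hval : padicValNat 2 (n+1) = 0 :=
        padicValNat.eq_zero_of_not_dvd (by omega)
      have e1 : s2 (n+1) = s2 q + 1 := by rw [hq, s2_odd]
      have e3 : s2 n = s2 q := by rw [show n = 2*q by omega, s2_two_mul]
      omega

private lemma s2_le_log (n : ℕ) : s2 n ≤ Nat.log 2 (n+1) := by
  induction n using Nat.strong_induction_on with
  | _ n ih =>
    rcases Nat.eq_zero_or_pos n with h | h
    · simp [h, s2]
    rcases Nat.even_or_odd n with ⟨q, hq⟩ | ⟨q, hq⟩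
    · have hq1 : 1 ≤ q := by omega
      rw [show n = 2*q by omega, s2_two_mul]
      calc s2 q ≤ Nat.log 2 (q+1) := ih q (by omega)
        _ ≤ Nat.log 2 (2*q+1) := Nat.log_mono_right (by omega)
    · rw [hq, s2_odd]
      have h2 : Nat.log 2 (2*q+1+1) = Nat.log 2 (q+1) + 1 := by
        rw [show 2*q+1+1 = (q+1)*2 by ring, Nat.log_mul_base (by norm_num) (by omega)]
      rw [h2]
      exact Nat.add_le_add_right (ih q (by omega)) 1

section Valuation

variable {K : Type*} [Field K] [Algebra ℚ_[2] K]
  (v : AddValuation K (WithTop ℚ)) (hv2 : v 2 = (1 : ℚ))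

set_option linter.unusedSectionVars false

private lemma vnat_nonneg (n : ℕ) : 0 ≤ v (n : K) := by
  induction n with
  | zero => simp
  | succ n ih =>
    push_cast
    refine le_trans ?_ (v.map_add _ _)
    simp [v.map_one, ih]

private lemma vint_nonneg (m : ℤ) : 0 ≤ v (m : K) := by
  rcases le_or_gt 0 m with h | h
  · lift m to ℕ using h; exact_mod_cast vnat_nonneg v m
  · have : v ((m:K)) = v ((-m : ℤ) : K) := by push_cast; rw [v.map_neg]
    rw [this]
    lift -m to ℕ using (by omega) with k hk
    exact_mod_cast vnat_nonneg v k

include hv2 in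
private lemma vodd (n : ℕ) (hn : Odd n) : v (n : K) = 0 := by
  haveI : CharZero K := charZero_of_injective_algebraMap (algebraMap ℚ_[2] K).injective
  have hb := Int.gcd_eq_gcd_ab (n : ℤ) 2
  have hg : Int.gcd (n : ℤ) 2 = 1 := by
    have h : Nat.gcd n 2 = 1 := hn.coprime_two_right
    have h2 : Int.gcd (n:ℤ) ((2:ℕ):ℤ) = Nat.gcd n 2 := Int.gcd_natCast_natCast n 2
    simpa [h] using h2
  rw [hg] at hb
  have hK : (1 : K) = (n : K) * ((Int.gcdA (n:ℤ) 2 : ℤ) : K) + 2 * ((Int.gcdB (n:ℤ) 2 : ℤ) : K) := by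
    exact_mod_cast congrArg (fun z : ℤ => (z : K)) hb
  have hmin := v.map_add ((n : K) * ((Int.gcdA (n:ℤ) 2 : ℤ) : K)) (2 * ((Int.gcdB (n:ℤ) 2 : ℤ) : K))
  rw [← hK, v.map_one] at hmin
  rw [v.map_mul, v.map_mul, hv2] at hmin
  have hA := vint_nonneg v (Int.gcdA (n:ℤ) 2)
  have hB := vint_nonneg v (Int.gcdB (n:ℤ) 2)
  have hN := vnat_nonneg (K := K) v n
  refine le_antisymm ?_ hN
  by_contra hlt
  push_neg at hlt
  have h1 : (0:WithTop ℚ) < v (n:K) + v ((Int.gcdA (n:ℤ) 2 : ℤ) : K) :=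
    add_pos_of_pos_of_nonneg hlt hA
  have h2 : (0:WithTop ℚ) < ((1:ℚ):WithTop ℚ) + v ((Int.gcdB (n:ℤ) 2 : ℤ) : K) :=
    add_pos_of_pos_of_nonneg (by norm_num) hB
  exact absurd ((lt_min h1 h2).trans_le hmin) (lt_irrefl _)

include hv2 in
private lemma vnat_val (n : ℕ) (hn : n ≠ 0) :
    v (n : K) = ((padicValNat 2 n : ℚ) : WithTop ℚ) := by
  have h := Nat.ordProj_mul_ordCompl_eq_self n 2
  have hodd : Odd (ordCompl[2] n) := by
    rcases Nat.even_or_odd (ordCompl[2] n) with he | ho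
    · exact absurd (even_iff_two_dvd.mp he) (Nat.not_dvd_ordCompl Nat.prime_two hn)
    · exact ho
  have hfac : n.factorization 2 = padicValNat 2 n := Nat.factorization_def n Nat.prime_two
  rw [hfac] at h
  conv_lhs => rw [← h]
  rw [Nat.cast_mul, v.map_mul, Nat.cast_pow, Nat.cast_ofNat, v.map_pow, hv2,
    vodd v hv2 _ (hfac ▸ hodd), add_zero]
  induction (padicValNat 2 n) with
  | zero => simp
  | succ k ihk => rw [succ_nsmul, ihk]; push_cast; ring_nf

end Valuation

/-- Valuation estimates for the solution of `t(t-4a)y' - (t-2a)y = f`: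
`v₂(y₀) = v₂(f₀) - 1`, `v₂(y₁) ≥ min(v₂(f₀) - 2, v₂(f₁) - 1)`, and for `i ≥ 2`,
`v₂(yᵢ) ≥ min_{2 ≤ k ≤ i} v₂(f_k) - ⌊log₂(i-1)⌋ - 1`. -/
theorem linear_ode_minus_valuation_bound
    {K : Type*} [Field K] [Algebra ℚ_[2] K] [FiniteDimensional ℚ_[2] K]
    (v : AddValuation K (WithTop ℚ)) (hv2 : v 2 = (1 : ℚ)) (a : K) (ha : v a = (0 : ℚ))
    (f y : PowerSeries K)
    (hy : X * (X - C (4 * a)) * d⁄dX K y - (X - C (2 * a)) * y = f) :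
    v (coeff 0 y) + ((1 : ℚ) : WithTop ℚ) = v (coeff 0 f) ∧
    min (v (coeff 0 f)) (v (coeff 1 f) + ((1 : ℚ) : WithTop ℚ)) ≤
      v (coeff 1 y) + ((2 : ℚ) : WithTop ℚ) ∧
    ∀ i : ℕ, 2 ≤ i →
      (Finset.Icc 2 i).inf (fun k => v (coeff k f)) ≤
        v (coeff i y) + (((Nat.log 2 (i - 1) : ℚ) + 1 : ℚ) : WithTop ℚ) := by
  -- coefficient recursion
  have key : ∀ n, coeff n f = coeff n (X * (X * d⁄dX K y)) - 4*a * coeff n (X * d⁄dX K y)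
      - coeff n (X * y) + 2*a * coeff n y := by
    intro n
    rw [← hy, show X * (X - C (4 * a)) * d⁄dX K y - (X - C (2 * a)) * y
      = (X * (X * d⁄dX K y)) - C (4*a) * (X * d⁄dX K y) - X * y + C (2*a) * y by ring]
    simp only [map_sub, map_add, coeff_C_mul]
  have h0 := key 0
  have h1 := key 1
  simp only [coeff_zero_eq_constantCoeff] at h0 h1
  simp [coeff_derivative, coeff_succ_X_mul] at h0 h1
  have E0 : coeff 0 f = 2 * a * coeff 0 y := by
    simp only [coeff_zero_eq_constantCoeff]; linear_combination h0
  have E1 : coeff 1 f = -coeff 0 y - 2 * a * coeff 1 y := by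
    simp only [coeff_zero_eq_constantCoeff]; linear_combination h1
  have Erec : ∀ m : ℕ, coeff (m+2) f
      = m * coeff (m+1) y - 2*a*(2*m+3) * coeff (m+2) y := by
    intro m
    have h2 := key (m+2)
    simp only [show (m:ℕ)+2 = (m+1)+1 from rfl, coeff_succ_X_mul, coeff_derivative] at h2
    push_cast at h2 ⊢
    linear_combination h2
  -- valuation of 2a
  have v2a : ∀ x : K, v (2 * a * x) = ((1:ℚ):WithTop ℚ) + v x := by
    intro x
    rw [v.map_mul, v.map_mul, hv2, ha]
    norm_num
  have coe11 : ((1:ℚ):WithTop ℚ) + ((1:ℚ):WithTop ℚ) = ((2:ℚ):WithTop ℚ) := by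
    rw [← WithTop.coe_add]; norm_num
  -- Part 1
  have part1 : v (coeff 0 y) + ((1 : ℚ) : WithTop ℚ) = v (coeff 0 f) := by
    rw [E0, v2a, add_comm]
  refine ⟨part1, ?_, ?_⟩
  -- Part 2
  · have e : 2 * a * coeff 1 y = -(coeff 0 y + coeff 1 f) := by
      linear_combination E1
    have h2v : ((1:ℚ):WithTop ℚ) + v (coeff 1 y) = v (coeff 0 y + coeff 1 f) := by
      rw [← v2a, e, v.map_neg]
    calc min (v (coeff 0 f)) (v (coeff 1 f) + ((1:ℚ):WithTop ℚ))
        = min (v (coeff 0 y) + ((1:ℚ):WithTop ℚ)) (v (coeff 1 f) + ((1:ℚ):WithTop ℚ)) := by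
          rw [part1]
      _ = min (v (coeff 0 y)) (v (coeff 1 f)) + ((1:ℚ):WithTop ℚ) :=
          min_add_add_right _ _ _
      _ ≤ v (coeff 0 y + coeff 1 f) + ((1:ℚ):WithTop ℚ) :=
          add_le_add_left (v.map_add _ _) _
      _ = (((1:ℚ):WithTop ℚ) + v (coeff 1 y)) + ((1:ℚ):WithTop ℚ) := by rw [h2v]
      _ = v (coeff 1 y) + ((2:ℚ):WithTop ℚ) := by
          rw [add_comm ((1:ℚ):WithTop ℚ) (v (coeff 1 y)), add_assoc, coe11]
  -- Part 3
  · have claim : ∀ m : ℕ, (Finset.Icc 2 (m+2)).inf (fun k => v (coeff k f)) ≤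
        v (coeff (m+2) y) + (((s2 m : ℚ) + 1 : ℚ) : WithTop ℚ) := by
      intro m
      induction m with
      | zero =>
        have e : coeff 2 f = -(2 * a * (3 * coeff 2 y)) := by
          have := Erec 0
          push_cast at this
          linear_combination this
        have hv3 : v (3 * coeff 2 y) = v (coeff 2 y) := by
          rw [v.map_mul, show (3:K) = ((3:ℕ):K) by norm_num,
            vodd v hv2 3 (by decide), zero_add]
        have : v (coeff 2 f) = ((1:ℚ):WithTop ℚ) + v (coeff 2 y) := by
          rw [e, v.map_neg, v2a, hv3]
        rw [show (0:ℕ)+2 = 2 from rfl, Finset.Icc_self, Finset.inf_singleton, this,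
          show ((s2 0 : ℚ) + 1 : ℚ) = (1:ℚ) by norm_num [s2], add_comm]
      | succ m ih =>
        -- recursion: 2a(2(m+1)+3) y_{m+3} = (m+1) y_{m+2} - f_{m+3}
        have e : 2 * a * (((2*(m+1)+3 : ℕ) : K) * coeff (m+3) y)
            = ((m+1 : ℕ) : K) * coeff (m+2) y - coeff (m+3) f := by
          have := Erec (m+1)
          rw [show (m:ℕ)+1+2 = m+3 by omega, show (m:ℕ)+1+1 = m+2 by omega] at this
          push_cast at this ⊢
          linear_combination this
        have hodd : Odd (2*(m+1)+3) := ⟨m+2, by ring⟩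
        have hL : v (2 * a * (((2*(m+1)+3 : ℕ) : K) * coeff (m+3) y))
            = ((1:ℚ):WithTop ℚ) + v (coeff (m+3) y) := by
          rw [v2a, v.map_mul, vodd v hv2 _ hodd, zero_add]
        have hR : min (v (((m+1 : ℕ) : K) * coeff (m+2) y)) (v (coeff (m+3) f))
            ≤ ((1:ℚ):WithTop ℚ) + v (coeff (m+3) y) := by
          rw [← hL, e]; exact v.map_sub _ _
        have hvm : v (((m+1 : ℕ) : K)) = ((padicValNat 2 (m+1) : ℚ) : WithTop ℚ) :=
          vnat_val v hv2 (m+1) (by omega)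
        set M3 := (Finset.Icc 2 (m+3)).inf (fun k => v (coeff k f)) with hM3
        have hmono : M3 ≤ (Finset.Icc 2 (m+2)).inf (fun k => v (coeff k f)) :=
          Finset.inf_mono (Finset.Icc_subset_Icc_right (by omega))
        have hmem : M3 ≤ v (coeff (m+3) f) :=
          Finset.inf_le (Finset.mem_Icc.mpr ⟨by omega, le_rfl⟩)
        -- branch A
        have hA : M3 ≤ v (((m+1 : ℕ) : K) * coeff (m+2) y) + ((s2 (m+1) : ℚ) : WithTop ℚ) := by
          rw [v.map_mul, hvm]
          have hid : ((padicValNat 2 (m+1) : ℚ) : WithTop ℚ) + ((s2 (m+1) : ℚ) : WithTop ℚ)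
              = (((s2 m : ℚ) + 1 : ℚ) : WithTop ℚ) := by
            have hnat := s2_succ_add_val m
            rw [← WithTop.coe_add]
            norm_cast
            omega
          calc M3 ≤ v (coeff (m+2) y) + (((s2 m : ℚ) + 1 : ℚ) : WithTop ℚ) :=
                hmono.trans ih
            _ = ((padicValNat 2 (m+1) : ℚ) : WithTop ℚ) + v (coeff (m+2) y)
                + ((s2 (m+1) : ℚ) : WithTop ℚ) := by
                rw [← hid]; abel
        -- branch B
        have hB : M3 ≤ v (coeff (m+3) f) + ((s2 (m+1) : ℚ) : WithTop ℚ) := by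
          refine hmem.trans (le_add_of_nonneg_right ?_)
          exact_mod_cast (by positivity : (0:ℚ) ≤ (s2 (m+1) : ℚ))
        calc M3 ≤ min (v (((m+1 : ℕ) : K) * coeff (m+2) y) + ((s2 (m+1) : ℚ) : WithTop ℚ))
              (v (coeff (m+3) f) + ((s2 (m+1) : ℚ) : WithTop ℚ)) := le_min hA hB
          _ = min (v (((m+1 : ℕ) : K) * coeff (m+2) y)) (v (coeff (m+3) f))
              + ((s2 (m+1) : ℚ) : WithTop ℚ) := min_add_add_right _ _ _
          _ ≤ (((1:ℚ):WithTop ℚ) + v (coeff (m+3) y)) + ((s2 (m+1) : ℚ) : WithTop ℚ) :=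
              add_le_add_left hR _
          _ = v (coeff (m+3) y) + (((s2 (m+1) : ℚ) + 1 : ℚ) : WithTop ℚ) := by
              rw [show ((s2 (m+1) : ℚ) + 1 : ℚ) = (1:ℚ) + (s2 (m+1) : ℚ) by ring,
                WithTop.coe_add]
              abel
    intro i hi
    obtain ⟨m, rfl⟩ : ∃ m, i = m + 2 := ⟨i - 2, by omega⟩
    have hlog : ((s2 m : ℚ) + 1 : ℚ) ≤ ((Nat.log 2 (m+2-1) : ℚ) + 1 : ℚ) := by
      have h' : (s2 m : ℚ) ≤ (Nat.log 2 (m+1) : ℚ) := by exact_mod_cast s2_le_log m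
      rw [show (m:ℕ)+2-1 = m+1 by omega]
      linarith
    exact (claim m).trans (add_le_add_right (WithTop.coe_le_coe.mpr hlog) _)
end

section
/- Let K be a field of characteristic zero, a ∈ K nonzero, and let ψ_+ (resp. ψ_−) denote the K-linear map on K⟦t⟧ sending f to the unique power series solution of t(t−4a)y' + (t−2a)y = f (resp. t(t−4a)y' − (t−2a)y = f). Then for all f ∈ K⟦t⟧, t(t−4a)·ψ_+(f) = ψ_−(t(t−4a)·f). -/
open PowerSeries

lemma homog_minus_zero {K : Type*} [Field K] [CharZero K] (a : K) (ha : a ≠ 0)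
    (w : PowerSeries K)
    (h : X * (X - C (R := K) (4 * a)) * d⁄dX K w - (X - C (R := K) (2 * a)) * w = 0) :
    w = 0 := by
  have h2a : (2 * a : K) ≠ 0 := mul_ne_zero two_ne_zero ha
  ext n
  induction n using Nat.strong_induction_on with
  | _ n ih =>
    have hc := congrArg (coeff (R := K) n) h
    have hexp : X * (X - C (R := K) (4 * a)) * d⁄dX K w - (X - C (R := K) (2 * a)) * w
        = X * (X * d⁄dX K w) - C (R := K) (4 * a) * (X * d⁄dX K w)
          - X * w + C (R := K) (2 * a) * w := by ring
    rw [hexp] at hc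
    simp only [map_sub, map_add, coeff_C_mul, map_zero] at hc
    rcases n with _ | m
    · -- n = 0
      simp only [coeff_zero_eq_constantCoeff, map_mul, constantCoeff_X, zero_mul,
        sub_zero, zero_sub, neg_add_eq_zero] at hc
      simp only [coeff_zero_eq_constantCoeff, map_zero]
      have h0 : (2 * a) * constantCoeff (R := K) w = 0 := by linear_combination -hc
      exact (mul_eq_zero.mp h0).resolve_left h2a
    · -- n = m + 1
      have hXdw : (coeff (R := K) m) (X * d⁄dX K w) = (m : K) * (coeff (R := K) m) w := by
        rcases m with _ | k
        · simp
        · rw [coeff_succ_X_mul, coeff_derivative]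
          push_cast
          ring
      have hIH : (coeff (R := K) m) w = 0 := by
        simpa using ih m (Nat.lt_succ_self m)
      simp only [coeff_succ_X_mul, hXdw, coeff_derivative, hIH, mul_zero,
        zero_sub, sub_zero] at hc
      have key : ((2 : K) * a - 4 * a * ((m : K) + 1)) * (coeff (R := K) (m + 1)) w = 0 := by
        linear_combination hc
      have hne : ((2 : K) * a - 4 * a * ((m : K) + 1)) ≠ 0 := by
        have heq : ((2 : K) * a - 4 * a * ((m : K) + 1)) = -(2 * a) * (2 * (m : K) + 1) := by
          ring
        rw [heq]
        apply mul_ne_zero (neg_ne_zero.mpr h2a)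
        have hnat : ((2 * m + 1 : ℕ) : K) ≠ 0 := Nat.cast_ne_zero.mpr (by omega)
        push_cast at hnat
        intro hcontra
        exact hnat (by linear_combination hcontra)
      simp only [map_zero]
      exact (mul_eq_zero.mp key).resolve_left hne

/-- Intertwining relation between the solution operators `ψ₊` and `ψ₋`:
if `y₊` solves `t(t-4a)y' + (t-2a)y = f` and `y₋` solves
`t(t-4a)y' - (t-2a)y = t(t-4a)·f`, then `t(t-4a)·y₊ = y₋`. -/
theorem psi_plus_psi_minus_intertwine
    {K : Type*} [Field K] [CharZero K] (a : K) (ha : a ≠ 0)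
    (f yplus yminus : PowerSeries K)
    (hplus : X * (X - C (R := K) (4 * a)) * d⁄dX K yplus + (X - C (R := K) (2 * a)) * yplus = f)
    (hminus : X * (X - C (R := K) (4 * a)) * d⁄dX K yminus - (X - C (R := K) (2 * a)) * yminus
      = X * (X - C (R := K) (4 * a)) * f) :
    X * (X - C (R := K) (4 * a)) * yplus = yminus := by
  have h42 : C (R := K) (4 * a) = 2 * C (R := K) (2 * a) := by
    rw [show (4 : K) * a = 2 * (2 * a) by ring, map_mul, map_ofNat]
  have hdg : d⁄dX K (X * (X - C (R := K) (4 * a))) = 2 * X - C (R := K) (4 * a) := by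
    rw [Derivation.leibniz]
    simp [smul_eq_mul]
    ring
  have hz : X * (X - C (R := K) (4 * a)) * d⁄dX K (X * (X - C (R := K) (4 * a)) * yplus)
      - (X - C (R := K) (2 * a)) * (X * (X - C (R := K) (4 * a)) * yplus)
      = X * (X - C (R := K) (4 * a)) * f := by
    rw [Derivation.leibniz, smul_eq_mul, smul_eq_mul, hdg, ← hplus, h42]
    ring
  have hw : X * (X - C (R := K) (4 * a)) * d⁄dX K (X * (X - C (R := K) (4 * a)) * yplus - yminus)
      - (X - C (R := K) (2 * a)) * (X * (X - C (R := K) (4 * a)) * yplus - yminus) = 0 := by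
    rw [map_sub]
    linear_combination hz - hminus
  have h0 := homog_minus_zero a ha _ hw
  linear_combination h0
end

section
/- Let K be a field of characteristic zero, a ∈ K nonzero, and let f ∈ K⟦t⟧ have t-adic valuation at least m (i.e., its first m coefficients vanish). Then the unique solution y of t(t−4a)y' + (t−2a)y = f also has t-adic valuation at least m. -/
open PowerSeries

/-- If `f` has `t`-adic valuation at least `m`, then so does the solution `y` of
`t(t-4a)y' + (t-2a)y = f`. -/
theorem psi_plus_preserves_t_adic_valuation
    {K : Type*} [Field K] [CharZero K] (a : K) (ha : a ≠ 0) (m : ℕ)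
    (f y : PowerSeries K)
    (hy : X * (X - C (4 * a)) * d⁄dX K y + (X - C (2 * a)) * y = f)
    (hf : ∀ k < m, coeff k f = 0) :
    ∀ k < m, coeff k y = 0 := by
  have hy' : X * ((X - C (4 * a)) * d⁄dX K y) + (X * y - C (2 * a) * y) = f := by
    rw [← hy]; ring
  intro k
  induction k using Nat.strong_induction_on with
  | _ k ih =>
    intro hk
    have h := congrArg (coeff k) hy'
    rw [hf k hk] at h
    match k with
    | 0 =>
      simp only [map_add, coeff_zero_X_mul, coeff_zero_eq_constantCoeff, map_sub, map_mul,
        constantCoeff_X, constantCoeff_C, zero_mul, zero_add, zero_sub, neg_mul] at h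
      have h2a : (2 : K) * a ≠ 0 := by
        simp [ha]
      rw [coeff_zero_eq_constantCoeff]
      exact (mul_eq_zero.mp (neg_eq_zero.mp h)).resolve_left h2a
    | k + 1 =>
      have hk' : k < m := lt_trans (Nat.lt_succ_self k) hk
      have hyk : coeff k y = 0 := ih k (Nat.lt_succ_self k) hk'
      simp only [sub_mul, map_add, map_sub, coeff_succ_X_mul, coeff_C_mul,
        coeff_derivative, hyk] at h
      -- h : (coeff k (X * dy) - 4a * (y_{k+1} * (k+1))) + (0 - 2a * y_{k+1}) = 0
      have hXdy : coeff k (X * d⁄dX K y) = 0 := by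
        match k with
        | 0 => exact coeff_zero_X_mul _
        | j + 1 =>
          rw [coeff_succ_X_mul, coeff_derivative]
          have : coeff (j + 1) y = 0 := ih (j + 1) (Nat.lt_succ_self _) hk'
          rw [this, zero_mul]
      rw [hXdy] at h
      have h3 : ((2 * k + 3 : ℕ) : K) ≠ 0 := Nat.cast_ne_zero.mpr (by omega)
      have hne : (4 * a * ((k : K) + 1) + 2 * a) ≠ 0 := by
        have he : (4 * a * ((k : K) + 1) + 2 * a) = 2 * a * ((2 * k + 3 : ℕ) : K) := by
          push_cast; ring
        rw [he]
        exact mul_ne_zero (mul_ne_zero two_ne_zero ha) h3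
      have : (4 * a * ((k : K) + 1) + 2 * a) * coeff (k+1) y = 0 := by
        linear_combination -h
      exact (mul_eq_zero.mp this).resolve_left hne
end

section
/- Newton iteration for the nonlinear equation: let K be a field of characteristic zero, U = t(t−4a)u(t)² with u(0) ≠ 0, V ∈ K⟦t⟧ of t-adic valuation 1, and let z_m ∈ t·K⟦t⟧ with z_m'(0) ≠ 0 satisfy U·(z_m')² ≡ V(z_m) mod t^m for some m > 1. Then z_m + z_m'·u·ψ_−( (1/(2u³))·(V(z_m)/(z_m')² − U) ) satisfies the equation U·(z')² ≡ V(z) mod t^{2m−1}. -/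
open PowerSeries

namespace NewtonAux

variable {K : Type*} [Field K] [CharZero K]

lemma derivative_X_pow (n : ℕ) : d⁄dX K ((X : K⟦X⟧) ^ n) = (n : K⟦X⟧) * X ^ (n - 1) := by
  rw [Derivation.leibniz_pow, derivative_X, smul_eq_mul, mul_one, nsmul_eq_mul]

lemma dvd_derivative_of_dvd {m : ℕ} {f : K⟦X⟧} (h : (X : K⟦X⟧) ^ m ∣ f) :
    (X : K⟦X⟧) ^ (m - 1) ∣ d⁄dX K f := by
  obtain ⟨g, rfl⟩ := h
  rw [Derivation.leibniz, smul_eq_mul, smul_eq_mul, derivative_X_pow]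
  exact dvd_add (Dvd.dvd.mul_right (pow_dvd_pow (X : K⟦X⟧) (Nat.sub_le m 1)) _)
    (Dvd.dvd.mul_left (dvd_mul_left _ _) _)

lemma coeff_pow_eq_zero {z : K⟦X⟧} (hz : constantCoeff z = 0) {n k : ℕ} (h : n < k) :
    coeff n (z ^ k) = 0 := by
  have hd : (X : K⟦X⟧) ^ k ∣ z ^ k := pow_dvd_pow_of_dvd (X_dvd_iff.2 hz) k
  exact X_pow_dvd_iff.1 hd n h

lemma comp_approx (V z : K⟦X⟧) (hz : constantCoeff z = 0) (N : ℕ) :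
    (X : K⟦X⟧) ^ N ∣ V.compSeries z - ∑ k ∈ Finset.range N, C (coeff k V) * z ^ k := by
  rw [X_pow_dvd_iff]
  intro n hn
  rw [map_sub, PowerSeries.compSeries, coeff_mk, map_sum, sub_eq_zero]
  simp only [coeff_C_mul]
  refine Finset.sum_subset (Finset.range_subset_range.2 hn) fun k _ hk => ?_
  rw [coeff_pow_eq_zero hz (by simpa using hk), mul_zero]

lemma taylor_pow (z w : K⟦X⟧) (k : ℕ) :
    ∃ c, (z + w) ^ k = z ^ k + (k : K⟦X⟧) * z ^ (k - 1) * w + w ^ 2 * c := by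
  induction k with
  | zero => exact ⟨0, by simp⟩
  | succ k ih =>
    rcases k with _ | j
    · exact ⟨0, by push_cast; ring⟩
    obtain ⟨c, hc⟩ := ih
    refine ⟨z * c + ((j : K⟦X⟧) + 1) * z ^ j + w * c, ?_⟩
    have h1 : (z + w) ^ (j + 1 + 1) = (z + w) ^ (j + 1) * (z + w) := by ring
    rw [h1, hc]
    simp only [Nat.add_sub_cancel]
    push_cast
    ring

lemma deriv_pow (z : K⟦X⟧) (k : ℕ) :
    d⁄dX K (z ^ k) = (k : K⟦X⟧) * z ^ (k - 1) * d⁄dX K z := by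
  rw [Derivation.leibniz_pow, smul_eq_mul, nsmul_eq_mul, mul_assoc]

lemma ode_dvd (a : K) (ha : a ≠ 0) (y f : K⟦X⟧) (m : ℕ)
    (hode : X * (X - C (4 * a)) * d⁄dX K y - (X - C (2 * a)) * y = f)
    (hf : (X : K⟦X⟧) ^ m ∣ f) : (X : K⟦X⟧) ^ m ∣ y := by
  have h2 : X * (X * d⁄dX K y) - C (4 * a) * (X * d⁄dX K y) - X * y + C (2 * a) * y = f := by
    linear_combination hode
  rw [X_pow_dvd_iff] at hf ⊢
  intro n hn
  induction n using Nat.strong_induction_on with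
  | _ n ih =>
    have hc := congrArg (coeff n) h2
    rw [hf n hn] at hc
    simp only [map_sub, map_add, coeff_C_mul] at hc
    rcases n with _ | k
    · -- constant coefficient
      simp only [coeff_zero_eq_constantCoeff, map_mul, constantCoeff_X, zero_mul, mul_zero,
        zero_sub, sub_zero, neg_zero, zero_add] at hc
      have h2a : (2 : K) * a ≠ 0 := mul_ne_zero two_ne_zero ha
      have : (2 * a) * constantCoeff y = 0 := by
        simpa using hc
      have h0 := (mul_eq_zero.1 this).resolve_left h2a
      simpa using h0
    · have hky : coeff k y = 0 := ih k (Nat.lt_succ_self k) (lt_trans (Nat.lt_succ_self k) hn)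
      rw [coeff_succ_X_mul, coeff_succ_X_mul, coeff_succ_X_mul, coeff_derivative, hky] at hc
      have hXy' : coeff k (X * d⁄dX K y) = 0 := by
        rcases k with _ | j
        · simp [PowerSeries.coeff_zero_eq_constantCoeff]
        · rw [coeff_succ_X_mul, coeff_derivative,
            ih (j + 1) (by omega) (by omega)]
          ring
      rw [hXy'] at hc
      have hfac : (2 * a - 4 * a * ((k : K) + 1)) * coeff (k + 1) y = 0 := by
        linear_combination hc
      have hne : (2 * a - 4 * a * ((k : K) + 1)) ≠ 0 := by
        have h1 : (2 * a - 4 * a * ((k : K) + 1)) = -(2 * a) * (2 * (k : K) + 1) := by ring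
        rw [h1]
        refine mul_ne_zero (neg_ne_zero.2 (mul_ne_zero two_ne_zero ha)) ?_
        have : ((2 * k + 1 : ℕ) : K) ≠ 0 := Nat.cast_ne_zero.2 (by omega)
        push_cast at this
        exact this
      exact (mul_eq_zero.1 hfac).resolve_left hne

end NewtonAux

open NewtonAux in
/-- Newton iteration: if `z_m` solves `U·(z')² = V(z)` modulo `t^m` with
`U = t(t-4a)u(t)²`, then `z_m + z_m'·u·ψ₋((1/(2u³))·(V(z_m)/(z_m')² - U))` solves it
modulo `t^(2m-1)`. -/
theorem newton_iteration_step
    {K : Type*} [Field K] [CharZero K] (a : K) (ha : a ≠ 0)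
    (u V z y : PowerSeries K) (m : ℕ) (hm : 1 < m)
    (hu : constantCoeff u ≠ 0)
    (hV0 : constantCoeff V = 0) (hV1 : coeff 1 V ≠ 0)
    (hz0 : constantCoeff z = 0) (hz1 : constantCoeff (d⁄dX K z) ≠ 0)
    (happrox : X ^ m ∣
      (X * (X - C (4 * a)) * u ^ 2) * (d⁄dX K z) ^ 2 - V.compSeries z)
    (hy : X * (X - C (4 * a)) * d⁄dX K y - (X - C (2 * a)) * y =
      (C 2 * u ^ 3)⁻¹ *
        (V.compSeries z * ((d⁄dX K z)⁻¹) ^ 2 - X * (X - C (4 * a)) * u ^ 2)) :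
    X ^ (2 * m - 1) ∣
      (X * (X - C (4 * a)) * u ^ 2) * (d⁄dX K (z + d⁄dX K z * u * y)) ^ 2 -
        V.compSeries (z + d⁄dX K z * u * y) := by
  classical
  set z' := d⁄dX K z with hz'def
  set U := X * (X - C (4 * a)) * u ^ 2 with hUdef
  set w := z' * u * y with hwdef
  have hC2 : (C 2 : K⟦X⟧) = 2 := map_ofNat C 2
  have hC4 : (C (4 * a) : K⟦X⟧) = 2 * C (2 * a) := by
    rw [show (4 * a : K) = 2 * (2 * a) by ring, map_mul, hC2]
  have h2u : constantCoeff (C 2 * u ^ 3) ≠ 0 := by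
    rw [map_mul, map_pow, constantCoeff_C]
    exact mul_ne_zero two_ne_zero (pow_ne_zero _ hu)
  have hinv2 : (C 2 * u ^ 3) * (C 2 * u ^ 3)⁻¹ = 1 :=
    PowerSeries.mul_inv_cancel _ h2u
  have hinvz : z' * z'⁻¹ = 1 := PowerSeries.mul_inv_cancel _ hz1
  have hzz2 : z' ^ 2 * (z'⁻¹) ^ 2 = 1 := by rw [← mul_pow, hinvz, one_pow]
  -- Step A : X^m ∣ y
  have hErhs : (C 2 * u ^ 3)⁻¹ * (V.compSeries z * (z'⁻¹) ^ 2 - U) =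
      -((C 2 * u ^ 3)⁻¹ * (z'⁻¹) ^ 2) * (U * z' ^ 2 - V.compSeries z) := by
    linear_combination ((C 2 * u ^ 3)⁻¹ * U) * hzz2
  have hyd : (X : K⟦X⟧) ^ m ∣ y := by
    refine ode_dvd a ha y _ m hy ?_
    rw [hErhs]
    exact happrox.mul_left _
  -- Step B : basic divisibilities
  have hwd : (X : K⟦X⟧) ^ m ∣ w := hyd.mul_left _
  have hw2 : (X : K⟦X⟧) ^ (2 * m) ∣ w ^ 2 := by
    rw [two_mul, pow_add, pow_two]
    exact mul_dvd_mul hwd hwd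
  have hw0 : constantCoeff w = 0 := by
    have : (X : K⟦X⟧) ∣ w := (dvd_pow_self X (by omega : m ≠ 0)).trans hwd
    exact X_dvd_iff.1 this
  have hzt0 : constantCoeff (z + w) = 0 := by rw [map_add, hz0, hw0, add_zero]
  have hdwd : (X : K⟦X⟧) ^ (m - 1) ∣ d⁄dX K w := dvd_derivative_of_dvd hwd
  -- Step C : polynomial approximations of the compositions
  have hP := comp_approx V z hz0 (2 * m)
  set P := ∑ k ∈ Finset.range (2 * m), C (coeff k V) * z ^ k with hPdef
  have hPt := comp_approx V (z + w) hzt0 (2 * m)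
  set Pt := ∑ k ∈ Finset.range (2 * m), C (coeff k V) * (z + w) ^ k with hPtdef
  set Q := ∑ k ∈ Finset.range (2 * m), C (coeff k V) * ((k : K⟦X⟧) * z ^ (k - 1))
    with hQdef
  -- Step D : chain rule for the truncated composition
  have hdP : d⁄dX K P = Q * z' := by
    rw [hPdef, hQdef, map_sum, Finset.sum_mul]
    refine Finset.sum_congr rfl fun k _ => ?_
    rw [Derivation.leibniz, smul_eq_mul, smul_eq_mul, derivative_C, NewtonAux.deriv_pow, ← hz'def]
    ring
  -- Step E : derivative of the composition mod X^(2m-1)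
  have hEQ : (X : K⟦X⟧) ^ (2 * m - 1) ∣ d⁄dX K (V.compSeries z) - Q * z' := by
    obtain ⟨r, hr⟩ := hP
    have hcomp : V.compSeries z = P + X ^ (2 * m) * r := by linear_combination hr
    rw [hcomp, map_add, hdP]
    have h1 : Q * z' + d⁄dX K (X ^ (2 * m) * r) - Q * z' = d⁄dX K (X ^ (2 * m) * r) := by
      ring
    rw [h1]
    have h2 : (X : K⟦X⟧) ^ (2 * m - 1) ∣ d⁄dX K (X ^ (2 * m) * r) :=
      dvd_derivative_of_dvd (dvd_mul_right _ _)
    exact h2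
  -- Step F : Taylor expansion of the truncated composition
  have hTay : (X : K⟦X⟧) ^ (2 * m) ∣ Pt - P - Q * w := by
    have hsum : Pt - P - Q * w = ∑ k ∈ Finset.range (2 * m),
        C (coeff k V) * ((z + w) ^ k - z ^ k - (k : K⟦X⟧) * z ^ (k - 1) * w) := by
      rw [hPtdef, hPdef, hQdef, Finset.sum_mul, ← Finset.sum_sub_distrib,
        ← Finset.sum_sub_distrib]
      refine Finset.sum_congr rfl fun k _ => ?_
      ring
    rw [hsum]
    refine Finset.dvd_sum fun k _ => ?_
    obtain ⟨c, hc⟩ := taylor_pow z w k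
    have h3 : (z + w) ^ k - z ^ k - (k : K⟦X⟧) * z ^ (k - 1) * w = w ^ 2 * c := by
      linear_combination hc
    rw [h3]
    exact ((hw2.mul_right c).mul_left _)
  -- Step G : the derivative of the defect
  have hdU : d⁄dX K U = (2 * X - C (4 * a)) * u ^ 2 +
      X * (X - C (4 * a)) * (2 * u * d⁄dX K u) := by
    rw [hUdef]
    rw [Derivation.leibniz, Derivation.leibniz, smul_eq_mul, smul_eq_mul, smul_eq_mul,
      smul_eq_mul, map_sub, derivative_X, derivative_C, NewtonAux.deriv_pow]
    push_cast
    ring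
  set Ep := d⁄dX K U * z' ^ 2 + 2 * U * z' * d⁄dX K z' - Q * z' with hEpdef
  have hdE : d⁄dX K (U * z' ^ 2 - V.compSeries z) =
      d⁄dX K U * z' ^ 2 + 2 * U * z' * d⁄dX K z' - d⁄dX K (V.compSeries z) := by
    rw [map_sub, Derivation.leibniz, smul_eq_mul, smul_eq_mul, Derivation.leibniz_pow,
      smul_eq_mul, nsmul_eq_mul]
    push_cast
    ring
  have hEp1 : (X : K⟦X⟧) ^ (2 * m - 1) ∣ d⁄dX K (U * z' ^ 2 - V.compSeries z) - Ep := by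
    rw [hdE, hEpdef]
    have h4 : d⁄dX K U * z' ^ 2 + 2 * U * z' * d⁄dX K z' - d⁄dX K (V.compSeries z) -
        (d⁄dX K U * z' ^ 2 + 2 * U * z' * d⁄dX K z' - Q * z') =
        -(d⁄dX K (V.compSeries z) - Q * z') := by ring
    rw [h4]
    exact hEQ.neg_right
  have hEp : (X : K⟦X⟧) ^ (m - 1) ∣ Ep := by
    have h1 : (X : K⟦X⟧) ^ (m - 1) ∣ d⁄dX K (U * z' ^ 2 - V.compSeries z) :=
      dvd_derivative_of_dvd happrox
    have h2 : (X : K⟦X⟧) ^ (m - 1) ∣ d⁄dX K (U * z' ^ 2 - V.compSeries z) - Ep :=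
      (pow_dvd_pow (X : K⟦X⟧) (by omega)).trans hEp1
    have h3 : Ep = d⁄dX K (U * z' ^ 2 - V.compSeries z) -
        (d⁄dX K (U * z' ^ 2 - V.compSeries z) - Ep) := by ring
    rw [h3]
    exact dvd_sub h1 h2
  -- Step H : the key algebraic identity
  have hdw_expand : d⁄dX K w = d⁄dX K z' * u * y + z' * d⁄dX K u * y + z' * u * d⁄dX K y := by
    rw [hwdef, Derivation.leibniz, Derivation.leibniz, smul_eq_mul, smul_eq_mul, smul_eq_mul,
      smul_eq_mul]
    ring
  have hy' : (C 2 * u ^ 3) * (X * (X - C (4 * a)) * d⁄dX K y - (X - C (2 * a)) * y) =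
      V.compSeries z * (z'⁻¹) ^ 2 - U := by
    rw [hy, ← mul_assoc, hinv2, one_mul]
  have hkey : (U * z' ^ 2 - V.compSeries z) + (2 * U * z' * d⁄dX K w - Q * w) =
      u * y * Ep := by
    rw [hdw_expand, hEpdef, hdU, hwdef, hUdef, hC4]
    rw [hUdef, hC4, hC2] at hy'
    linear_combination z' ^ 2 * hy' + V.compSeries z * hzz2
  -- Final assembly
  have hdzt : d⁄dX K (z + w) = z' + d⁄dX K w := by rw [map_add, hz'def]
  have p1 : (X : K⟦X⟧) ^ (2 * m - 1) ∣ u * y * Ep := by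
    have harith : 2 * m - 1 = m + (m - 1) := by omega
    rw [harith, pow_add]
    exact mul_dvd_mul (hyd.mul_left u) hEp
  have p2 : (X : K⟦X⟧) ^ (2 * m - 1) ∣ U * (d⁄dX K w) ^ 2 := by
    have harith : 2 * m - 1 = 1 + ((m - 1) + (m - 1)) := by omega
    rw [harith, pow_add, pow_add, pow_one]
    have hXU : (X : K⟦X⟧) ∣ U := ⟨(X - C (4 * a)) * u ^ 2, by rw [hUdef]; ring⟩
    have hdw2 : (X : K⟦X⟧) ^ (m - 1) * X ^ (m - 1) ∣ (d⁄dX K w) ^ 2 := by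
      rw [pow_two]; exact mul_dvd_mul hdwd hdwd
    exact mul_dvd_mul hXU hdw2
  have p3 : (X : K⟦X⟧) ^ (2 * m - 1) ∣ V.compSeries z - P :=
    (pow_dvd_pow (X : K⟦X⟧) (by omega)).trans hP
  have p4 : (X : K⟦X⟧) ^ (2 * m - 1) ∣ V.compSeries (z + w) - Pt :=
    (pow_dvd_pow (X : K⟦X⟧) (by omega)).trans hPt
  have p5 : (X : K⟦X⟧) ^ (2 * m - 1) ∣ Pt - P - Q * w :=
    (pow_dvd_pow (X : K⟦X⟧) (by omega)).trans hTay
  have hfinal : U * (d⁄dX K (z + w)) ^ 2 - V.compSeries (z + w) =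
      u * y * Ep + U * (d⁄dX K w) ^ 2 + (V.compSeries z - P) -
        (V.compSeries (z + w) - Pt) - (Pt - P - Q * w) := by
    rw [hdzt]
    linear_combination hkey
  rw [hfinal]
  exact dvd_sub (dvd_sub (dvd_add (dvd_add p1 p2) p3) p4) p5
end

section
/- Comparison of Gauss norms for the operator ψ_+: let K be a finite extension of ℚ₂, a ∈ O_K^×, and 0 < r < s ≤ 1. For any f ∈ K⟦t⟧ with ‖f‖_s < ∞, the solution y = ψ_+(f) of t(t−4a)y' + (t−2a)y = f satisfies ‖y‖_r ≤ max(2, 2/log(s/r)) · ‖f‖_s. -/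
open PowerSeries

section aux
variable {K : Type*} [NormedField K]

variable {K : Type*} [NormedField K]

lemma aux_natCast_le_one (hna : IsNonarchimedean (norm : K → ℝ)) (n : ℕ) :
    ‖(n : K)‖ ≤ 1 := by
  induction n with
  | zero => simp
  | succ n ih =>
      push_cast
      exact le_trans (hna _ _) (max_le ih (by simp))

lemma aux_odd_norm (hna : IsNonarchimedean (norm : K → ℝ)) (h2 : ‖(2 : K)‖ = 1/2)
    (n : ℕ) : ‖((2*n+1 : ℕ) : K)‖ = 1 := by
  have hn : ‖((2*n : ℕ) : K)‖ ≤ 1/2 := by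
    push_cast
    rw [norm_mul, h2]
    nlinarith [aux_natCast_le_one hna n, norm_nonneg ((n : K))]
  have hup : ‖((2*n+1 : ℕ) : K)‖ ≤ 1 := by
    push_cast
    push_cast at hn
    refine le_trans (hna _ _) (max_le (by linarith) (by simp))
  have hlow : (1:ℝ) ≤ ‖((2*n+1 : ℕ) : K)‖ := by
    push_cast at hn ⊢
    have h1 : (1:K) = (2*(n:K)+1) + (-(2*(n:K))) := by ring
    have := hna (2*(n:K)+1) (-(2*(n:K)))
    rw [← h1, norm_one, norm_neg] at this
    rcases max_cases ‖2*(n:K)+1‖ ‖2*(n:K)‖ with ⟨he, _⟩ | ⟨he, _⟩ <;> rw [he] at this <;> linarith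
  linarith




lemma aux_fact_two_mul (hna : IsNonarchimedean (norm : K → ℝ)) (h2 : ‖(2 : K)‖ = 1/2)
    (m : ℕ) : ‖(((2*m).factorial : ℕ) : K)‖ = (1/2:ℝ)^m * ‖((m.factorial : ℕ) : K)‖ := by
  induction m with
  | zero => simp
  | succ m ih =>
      have h1 : 2*(m+1) = (2*m+1)+1 := by ring
      have hodd := aux_odd_norm hna h2 m
      rw [h1, Nat.factorial_succ, Nat.factorial_succ, Nat.factorial_succ]
      push_cast
      push_cast at ih hodd
      rw [show ((2:K)*m+1+1) = 2*((m:K)+1) by ring]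
      rw [norm_mul, norm_mul, norm_mul, norm_mul, h2, hodd, ih]
      ring

lemma aux_fact_le (hna : IsNonarchimedean (norm : K → ℝ)) (h2 : ‖(2 : K)‖ = 1/2)
    (n : ℕ) : (2:ℝ)^n * ‖((n.factorial : ℕ) : K)‖ ≤ (n:ℝ)+1 := by
  induction n using Nat.strong_induction_on with
  | _ n ih =>
    rcases Nat.eq_zero_or_pos n with h0 | h0
    · subst h0; simp
    have he : ∀ m : ℕ, ((2:ℝ)^2)^m * (1/2:ℝ)^m = 2^m := by
      intro m; rw [← mul_pow]; norm_num
    rcases Nat.even_or_odd n with ⟨m, hm⟩ | ⟨m, hm⟩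
    · have hm0 : n = 2*m := by omega
      subst hm0
      have hih := ih m (by omega)
      rw [aux_fact_two_mul hna h2, pow_mul]
      have hcast : ((2*m : ℕ) : ℝ) = 2*(m:ℝ) := by push_cast; ring
      rw [hcast]
      nlinarith [he m, norm_nonneg ((m.factorial : K)), pow_pos (show (0:ℝ)<2 by norm_num) m]
    · subst hm
      have hih := ih m (by omega)
      rw [Nat.factorial_succ]
      push_cast
      rw [norm_mul, show (2*(m:K)+1) = ((2*m+1 : ℕ) : K) by push_cast; ring,
        aux_odd_norm hna h2, aux_fact_two_mul hna h2, one_mul, pow_succ, pow_mul]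
      nlinarith [he m, norm_nonneg ((m.factorial : K)), pow_pos (show (0:ℝ)<2 by norm_num) m]

lemma aux_fact_ge (hna : IsNonarchimedean (norm : K → ℝ)) (h2 : ‖(2 : K)‖ = 1/2)
    (n : ℕ) : (1/2:ℝ)^n ≤ ‖((n.factorial : ℕ) : K)‖ := by
  induction n using Nat.strong_induction_on with
  | _ n ih =>
    rcases Nat.eq_zero_or_pos n with h0 | h0
    · subst h0; simp
    have he : ∀ m : ℕ, ((1/2:ℝ)^2)^m = (1/2:ℝ)^m * (1/2:ℝ)^m := by
      intro m; rw [← mul_pow]; norm_num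
    rcases Nat.even_or_odd n with ⟨m, hm⟩ | ⟨m, hm⟩
    · have hm0 : n = 2*m := by omega
      subst hm0
      have hih := ih m (by omega)
      rw [aux_fact_two_mul hna h2, pow_mul]
      have hp : (0:ℝ) < (1/2:ℝ)^m := by positivity
      nlinarith [he m]
    · subst hm
      have hih := ih m (by omega)
      rw [Nat.factorial_succ]
      push_cast
      rw [norm_mul, show (2*(m:K)+1) = ((2*m+1 : ℕ) : K) by push_cast; ring,
        aux_odd_norm hna h2, aux_fact_two_mul hna h2, one_mul, pow_succ, pow_mul]
      have hp : (0:ℝ) < (1/2:ℝ)^m := by positivity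
      nlinarith [he m]

end aux


lemma aux_analytic (c : ℝ) (hc : 0 < c) (n : ℕ) :
    ((n:ℝ)+1) * Real.exp (-(c*n)) ≤ max 1 (1/c) := by
  have hn0 : (0:ℝ) ≤ (n:ℝ) := Nat.cast_nonneg n
  have h1 : (0:ℝ) < 1 + c*n := by positivity
  have hexp : Real.exp (-(c*n)) ≤ 1/(1+c*n) := by
    rw [Real.exp_neg, one_div]
    have := Real.add_one_le_exp (c*n)
    exact inv_anti₀ h1 (by linarith)
  have h3 : ((n:ℝ)+1) * Real.exp (-(c*n)) ≤ ((n:ℝ)+1) * (1/(1+c*n)) :=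
    mul_le_mul_of_nonneg_left hexp (by linarith)
  refine le_trans h3 ?_
  rcases le_or_gt c 1 with hc1 | hc1
  · refine le_max_of_le_right ?_
    rw [mul_one_div, div_le_div_iff₀ h1 hc]
    nlinarith
  · refine le_max_of_le_left ?_
    rw [mul_one_div, div_le_one h1]
    nlinarith


/-- Gauss norm comparison for `ψ₊`: if `y` solves `t(t-4a)y' + (t-2a)y = f` and
`‖f‖_s = Nf`, then `‖y‖_r ≤ max(2, 2/log(s/r))·Nf` for `0 < r < s ≤ 1`. -/
theorem psi_plus_gauss_norm_bound
    {K : Type*} [NormedField K] [Algebra ℚ_[2] K] [FiniteDimensional ℚ_[2] K]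
    (hna : IsNonarchimedean (norm : K → ℝ)) (h2 : ‖(2 : K)‖ = 1 / 2)
    (a : K) (ha : ‖a‖ = 1)
    (r s : ℝ) (hr : 0 < r) (hrs : r < s) (hs : s ≤ 1)
    (f y : PowerSeries K) (Nf : ℝ)
    (hNf : IsLUB (Set.range fun n : ℕ => ‖coeff n f‖ * s ^ n) Nf)
    (hy : X * (X - C (4 * a)) * d⁄dX K y + (X - C (2 * a)) * y = f) :
    ∀ n : ℕ, ‖coeff n y‖ * r ^ n ≤ max 2 (2 / Real.log (s / r)) * Nf := by
  have hs0 : 0 < s := lt_trans hr hrs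
  have hub : ∀ n : ℕ, ‖coeff n f‖ * s ^ n ≤ Nf := fun n => hNf.1 ⟨n, rfl⟩
  have hNf0 : 0 ≤ Nf := le_trans (by positivity) (hub 0)
  have hfb : ∀ n : ℕ, ‖coeff n f‖ ≤ Nf / s ^ n := by
    intro n
    rw [le_div_iff₀ (by positivity)]
    exact hub n
  have hXd : ∀ m : ℕ, coeff m (X * d⁄dX K y) = (m : K) * coeff m y := by
    intro m
    cases m with
    | zero => simp
    | succ m => rw [coeff_succ_X_mul, coeff_derivative]; push_cast; ring
  have hexp : X * (X - C (4*a)) * d⁄dX K y + (X - C (2*a)) * y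
      = (X * (X * d⁄dX K y) + X * y) - (C (4*a) * (X * d⁄dX K y) + C (2*a) * y) := by
    ring
  have hbase : coeff 0 f = -(2*a) * coeff 0 y := by
    rw [← hy, hexp, map_sub, map_add, map_add, coeff_zero_X_mul, coeff_zero_X_mul,
      coeff_C_mul, coeff_C_mul, coeff_zero_X_mul]
    ring
  have hrec : ∀ n : ℕ, coeff (n+1) f
      = ((n:K)+1) * coeff n y - 2*a*(2*(n:K)+3) * coeff (n+1) y := by
    intro n
    rw [← hy, hexp, map_sub, map_add, map_add, coeff_succ_X_mul, coeff_succ_X_mul,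
      coeff_C_mul, coeff_C_mul, hXd, hXd]
    push_cast
    ring
  have key : ∀ n : ℕ, ‖coeff n y‖ ≤ 2^(n+1) * ‖((n.factorial : ℕ) : K)‖ * (Nf / s^n) := by
    intro n
    induction n with
    | zero =>
        have h0 : ‖coeff 0 y‖ = 2 * ‖coeff 0 f‖ := by
          rw [hbase, norm_mul, norm_neg, norm_mul, h2, ha]; ring
        have h1 := hfb 0
        rw [pow_zero, div_one] at h1
        calc ‖coeff 0 y‖ = 2 * ‖coeff 0 f‖ := h0
          _ ≤ 2 * Nf := by linarith
          _ ≤ 2^(0+1) * ‖((Nat.factorial 0 : ℕ) : K)‖ * (Nf / s^0) := by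
              norm_num [Nat.factorial]
    | succ n ih =>
        have hodd : ‖(2*(n:K)+3)‖ = 1 := by
          have h := aux_odd_norm hna h2 (n+1)
          rw [show (((2*(n+1)+1 : ℕ)) : K) = 2*(n:K)+3 by push_cast; ring] at h
          exact h
        have hlhs : ‖2*a*(2*(n:K)+3) * coeff (n+1) y‖ = (1/2) * ‖coeff (n+1) y‖ := by
          rw [norm_mul, norm_mul, norm_mul, h2, ha, hodd]; ring
        have heq : 2*a*(2*(n:K)+3) * coeff (n+1) y
            = ((n:K)+1) * coeff n y - coeff (n+1) f := by
          linear_combination hrec n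
        have hsub : ‖((n:K)+1) * coeff n y - coeff (n+1) f‖
            ≤ max (‖((n:K)+1) * coeff n y‖) (‖coeff (n+1) f‖) := by
          have h := hna (((n:K)+1) * coeff n y) (-(coeff (n+1) f))
          rwa [← sub_eq_add_neg, norm_neg] at h
        set T := 2^(n+1) * ‖(((n+1).factorial : ℕ) : K)‖ * (Nf / s^(n+1)) with hT
        have hT0 : 0 ≤ T := by positivity
        have hdiv : Nf / s^n ≤ Nf / s^(n+1) := by
          rw [div_le_div_iff₀ (by positivity) (by positivity)]
          exact mul_le_mul_of_nonneg_left (pow_le_pow_of_le_one hs0.le hs (Nat.le_succ n)) hNf0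
        have hfactsucc : ‖(((n+1).factorial : ℕ) : K)‖ = ‖((n+1 : ℕ) : K)‖ * ‖((n.factorial : ℕ) : K)‖ := by
          rw [Nat.factorial_succ]; push_cast; rw [norm_mul]
        have hA : ‖((n:K)+1) * coeff n y‖ ≤ T := by
          rw [norm_mul, show ((n:K)+1) = ((n+1 : ℕ) : K) by push_cast; ring]
          calc ‖((n+1 : ℕ) : K)‖ * ‖coeff n y‖
              ≤ ‖((n+1 : ℕ) : K)‖ * (2^(n+1) * ‖((n.factorial : ℕ) : K)‖ * (Nf / s^n)) :=
                mul_le_mul_of_nonneg_left ih (norm_nonneg _)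
            _ = 2^(n+1) * ‖(((n+1).factorial : ℕ) : K)‖ * (Nf / s^n) := by
                rw [hfactsucc]; ring
            _ ≤ T := by rw [hT]; gcongr
        have hone : (1:ℝ) ≤ 2^(n+1) * ‖(((n+1).factorial : ℕ) : K)‖ := by
          have h := aux_fact_ge hna h2 (n+1)
          calc (1:ℝ) = 2^(n+1) * (1/2:ℝ)^(n+1) := by rw [← mul_pow]; norm_num
            _ ≤ 2^(n+1) * ‖(((n+1).factorial : ℕ) : K)‖ :=
                mul_le_mul_of_nonneg_left h (by positivity)
        have hF : ‖coeff (n+1) f‖ ≤ T := by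
          refine le_trans (hfb (n+1)) ?_
          rw [hT]
          nlinarith [div_nonneg hNf0 (pow_nonneg hs0.le (n+1))]
        have hmax : ‖((n:K)+1) * coeff n y - coeff (n+1) f‖ ≤ T :=
          le_trans hsub (max_le hA hF)
        rw [heq] at hlhs
        have : (1/2) * ‖coeff (n+1) y‖ ≤ T := hlhs ▸ hmax
        rw [hT] at this
        rw [show n+1+1 = (n+1)+1 from rfl, pow_succ]
        nlinarith
  intro n
  have hk := key n
  have hfl := aux_fact_le hna h2 n
  have hc : 0 < Real.log (s/r) := Real.log_pos ((one_lt_div hr).2 hrs)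
  set c := Real.log (s/r) with hcdef
  have hlogrs : Real.log (r/s) = -c := by
    rw [hcdef, Real.log_div hr.ne' hs0.ne', Real.log_div hs0.ne' hr.ne']; ring
  have hrse : r/s = Real.exp (-c) := by
    rw [← hlogrs, Real.exp_log (div_pos hr hs0)]
  have hpow : (r/s)^n = Real.exp (-(c*n)) := by
    rw [hrse, ← Real.exp_nat_mul]
    congr 1
    ring
  have hrsn : 0 ≤ (r/s)^n := by positivity
  calc ‖coeff n y‖ * r^n
      ≤ (2^(n+1) * ‖((n.factorial : ℕ) : K)‖ * (Nf / s^n)) * r^n :=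
        mul_le_mul_of_nonneg_right hk (pow_nonneg hr.le n)
    _ = (2^n * ‖((n.factorial : ℕ) : K)‖) * 2 * (Nf * (r/s)^n) := by
        rw [div_pow, pow_succ]
        field_simp
    _ ≤ ((n:ℝ)+1) * 2 * (Nf * (r/s)^n) := by
        have hnn : 0 ≤ Nf * (r/s)^n := by positivity
        nlinarith
    _ = 2 * (((n:ℝ)+1) * Real.exp (-(c*n))) * Nf := by rw [hpow]; ring
    _ ≤ 2 * max 1 (1/c) * Nf := by
        have := aux_analytic c hc n
        nlinarith [aux_analytic c hc n]
    _ = max 2 (2/c) * Nf := by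
        congr 1
        rw [mul_max_of_nonneg _ _ (by norm_num : (0:ℝ) ≤ 2), mul_one, mul_one_div]
end

section
/- Differential of the solution map: let K be a field of characteristic zero, a ∈ K nonzero, n ≥ 1, and for an invertible g ∈ K⟦t⟧/(t^n) let z_g ∈ t·K⟦t⟧/(t^{n+1}) denote the unique nonzero solution of t(t−4a)(z')² = g²·V(z) modulo t^{n+1} (for fixed V of t-adic valuation 1). If δz is a first-order variation satisfying the linearized equation 2t(t−4a)z_g'·(δz)' = 2g·δg·V(z_g) + g²·V'(z_g)·δz, and z_g' and g are units, then δz = t(t−4a)·z_g'·g^{−1}·ψ_{+}(δg) modulo t^{n+1}, where ψ_+ solves t(t−4a)y' + (t−2a)y = δg. -/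
open PowerSeries

section Aux

variable {K : Type*} [CommRing K]

lemma aux_coeff_one_mul (φ ψ : PowerSeries K) :
    coeff 1 (φ * ψ) = coeff 0 φ * coeff 1 ψ + coeff 1 φ * coeff 0 ψ := by
  rw [coeff_mul]
  rw [show Finset.HasAntidiagonal.antidiagonal 1 = {(0,1),(1,0)} by decide]
  simp

lemma aux_comp (V z : PowerSeries K) (hz0 : constantCoeff z = 0) (N : ℕ) :
    X ^ N ∣ V.compSeries z - ∑ k ∈ Finset.range N, C (coeff k V) * z ^ k := by
  rw [X_pow_dvd_iff]
  intro m hm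
  rw [PowerSeries.compSeries, map_sub, coeff_mk, map_sum]
  have hsub : Finset.range (m+1) ⊆ Finset.range N := by
    intro k hk; simp only [Finset.mem_range] at *; omega
  rw [show (∑ k ∈ Finset.range N, coeff m (C (coeff k V) * z ^ k))
      = ∑ k ∈ Finset.range N, coeff k V * coeff m (z ^ k) by
    exact Finset.sum_congr rfl fun k _ => by rw [coeff_C_mul]]
  rw [← Finset.sum_subset hsub]
  · ring
  · intro k hk hk'
    simp only [Finset.mem_range] at hk hk'
    have : coeff m (z ^ k) = 0 := by
      have hdvd : (X : PowerSeries K) ^ k ∣ z ^ k := pow_dvd_pow_of_dvd (X_dvd_iff.mpr hz0) k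
      exact X_pow_dvd_iff.mp hdvd m (by omega)
    rw [this, mul_zero]

lemma aux_deriv_dvd (N : ℕ) (f : PowerSeries K) (h : X^(N+1) ∣ f) : X^N ∣ d⁄dX K f := by
  obtain ⟨w, rfl⟩ := h
  rw [Derivation.leibniz, Derivation.leibniz_pow]
  simp only [smul_eq_mul, nsmul_eq_mul, derivative_X, mul_one, Nat.add_sub_cancel]
  apply dvd_add
  · exact dvd_mul_of_dvd_left (pow_dvd_pow X (Nat.le_succ N)) _
  · exact Dvd.dvd.mul_left (dvd_mul_left _ _) _

lemma aux_dA {K : Type*} [Field K] (a : K) :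
    d⁄dX K (X * (X - C (4*a))) = 2*(X - C (2*a)) := by
  have h4 : C (4*a) = 2 * C (2*a) := by
    rw [show (4:K)*a = 2*(2*a) by ring, map_mul, map_ofNat]
  simp only [Derivation.leibniz, smul_eq_mul, map_sub, derivative_X, derivative_C]
  rw [h4]; ring

lemma aux_PQ (n : ℕ) (V z : PowerSeries K) :
    d⁄dX K (∑ k ∈ Finset.range (n+2), C (coeff k V) * z ^ k)
      = (∑ k ∈ Finset.range (n+1), C (coeff k (d⁄dX K V)) * z ^ k) * d⁄dX K z := by
  rw [map_sum, Finset.sum_mul]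
  rw [Finset.sum_range_succ' (fun k => d⁄dX K (C (coeff k V) * z ^ k)) (n+1)]
  have h0 : d⁄dX K (C (coeff 0 V) * z ^ 0) = 0 := by simp
  rw [h0, add_zero]
  apply Finset.sum_congr rfl
  intro j hj
  rw [Derivation.leibniz, Derivation.leibniz_pow]
  simp only [smul_eq_mul, nsmul_eq_mul, derivative_C, mul_zero, zero_add,
    Nat.add_sub_cancel, coeff_derivative]
  rw [map_mul (C (R := K))]
  push_cast
  simp only [map_add, map_one, map_natCast]
  ring

lemma aux_homog {K : Type*} [Field K] [CharZero K] (n : ℕ) (b c u : PowerSeries K) (β : K)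
    (hβ : β ≠ 0)
    (hb0 : coeff 0 b = 0) (hb1 : coeff 1 b = β) (hc0 : coeff 0 c = β)
    (h : X ^ (n+1) ∣ 2 * b * d⁄dX K u - c * u) : X ^ (n+1) ∣ u := by
  rw [X_pow_dvd_iff] at h ⊢
  intro m hm
  induction m using Nat.strong_induction_on with
  | _ m IH =>
  have hIH : ∀ j, j < m → coeff j u = 0 := fun j hj => IH j hj (hj.trans hm)
  have h0 := h m hm
  have hbu : coeff m (b * d⁄dX K u) = β * m * coeff m u := by
    cases m with
    | zero =>
      rw [coeff_mul]
      simp [hb0]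
    | succ m' =>
      rw [coeff_mul]
      rw [Finset.sum_eq_single (1, m')]
      · rw [hb1, coeff_derivative]
        push_cast; ring
      · rintro ⟨i, j⟩ hij hne
        rw [Finset.HasAntidiagonal.mem_antidiagonal] at hij
        rcases Nat.eq_zero_or_pos i with hi | hi
        · subst hi; rw [hb0, zero_mul]
        · have hi2 : 2 ≤ i := by
            rcases Nat.lt_or_ge i 2 with h' | h'
            · exfalso
              have hi1 : i = 1 := by omega
              apply hne
              subst hi1
              have : j = m' := by omega
              simp [this]
            · exact h'
          have : coeff j (d⁄dX K u) = 0 := by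
            rw [coeff_derivative, hIH (j+1) (by omega), zero_mul]
          rw [this, mul_zero]
      · intro hmem
        exfalso; exact hmem (by simp [Finset.mem_antidiagonal]; try omega)
  have hcu : coeff m (c * u) = β * coeff m u := by
    rw [coeff_mul]
    rw [Finset.sum_eq_single (0, m)]
    · rw [hc0]
    · rintro ⟨i, j⟩ hij hne
      rw [Finset.HasAntidiagonal.mem_antidiagonal] at hij
      rcases Nat.eq_zero_or_pos i with hi | hi
      · exfalso; exact hne (by subst hi; simp at hij ⊢; omega)
      · rw [hIH j (by omega), mul_zero]
    · intro hmem
      exfalso; exact hmem (by simp [Finset.mem_antidiagonal]; try omega)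
  have hexp : (2 : PowerSeries K) * b * d⁄dX K u - c * u
      = (b * d⁄dX K u + b * d⁄dX K u) - c * u := by ring
  rw [hexp, map_sub, map_add, hbu, hcu] at h0
  have hfac : (β * (2 * (m:K) - 1)) * coeff m u = 0 := by linear_combination h0
  have h21 : (2 * (m:K) - 1) ≠ 0 := by
    intro hc
    have : ((2*m : ℕ) : K) = ((1:ℕ) : K) := by push_cast; linear_combination hc
    have := Nat.cast_injective (R := K) this
    omega
  rcases mul_eq_zero.mp hfac with h' | h'
  · exact absurd h' (mul_ne_zero hβ h21)
  · exact h'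

end Aux

/-- Differential of the solution map of `t(t-4a)(z')² = g²·V(z)`: a first-order
variation `δz` satisfying the linearized equation equals
`t(t-4a)·z'·g⁻¹·ψ₊(δg)` modulo `t^(n+1)`. -/
theorem solution_map_differential
    {K : Type*} [Field K] [CharZero K] (a : K) (ha : a ≠ 0) (n : ℕ) (hn : 1 ≤ n)
    (g V z δz δg y : PowerSeries K)
    (hg : constantCoeff g ≠ 0)
    (hV0 : constantCoeff V = 0) (hV1 : coeff 1 V ≠ 0)
    (hz0 : constantCoeff z = 0) (hz1 : constantCoeff (d⁄dX K z) ≠ 0)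
    (hzsol : X ^ (n + 1) ∣
      X * (X - C (4 * a)) * (d⁄dX K z) ^ 2 - g ^ 2 * V.compSeries z)
    (hlin : X ^ (n + 1) ∣
      C (2 : K) * X * (X - C (4 * a)) * d⁄dX K z * d⁄dX K δz -
        (C (2 : K) * g * δg * V.compSeries z + g ^ 2 * (d⁄dX K V).compSeries z * δz))
    (hy : X * (X - C (4 * a)) * d⁄dX K y + (X - C (2 * a)) * y = δg) :
    X ^ (n + 1) ∣ δz - X * (X - C (4 * a)) * d⁄dX K z * g⁻¹ * y := by
  set A : PowerSeries K := X * (X - C (4*a)) with hAdef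
  set zp : PowerSeries K := d⁄dX K z with hzpdef
  set P : PowerSeries K := ∑ k ∈ Finset.range (n+2), C (coeff k V) * z ^ k with hPdef
  set Q : PowerSeries K := ∑ k ∈ Finset.range (n+1), C (coeff k (d⁄dX K V)) * z ^ k
    with hQdef
  have hdA : d⁄dX K A = 2*(X - C (2*a)) := by rw [hAdef]; exact aux_dA a
  have hPQ : d⁄dX K P = Q * zp := aux_PQ n V z
  have hG : g * g⁻¹ = 1 := PowerSeries.mul_inv_cancel g hg
  -- E1
  have t2 : X ^ (n+1) ∣ V.compSeries z - P := by
    exact dvd_trans (pow_dvd_pow X (by omega)) (aux_comp V z hz0 (n+2))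
  have t3 : X ^ (n+1) ∣ (d⁄dX K V).compSeries z - Q := aux_comp (d⁄dX K V) z hz0 (n+1)
  have E1c : X ^ (n+1) ∣ A * zp^2 - g^2 * P := by
    have heq : A * zp^2 - g^2*P
        = (A * zp^2 - g^2*(V.compSeries z)) + g^2*((V.compSeries z) - P) := by ring
    rw [heq]
    exact dvd_add hzsol (t2.mul_left _)
  -- E2
  have E2c : X ^ n ∣ 2*(X - C (2*a))*zp^2 + 2*A*zp*(d⁄dX K zp)
      - (2*g*(d⁄dX K g)*P + g^2*(Q*zp)) := by
    have hd := aux_deriv_dvd n _ E1c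
    have hexp : d⁄dX K (A * zp^2 - g^2 * P)
        = 2*(X - C (2*a))*zp^2 + 2*A*zp*(d⁄dX K zp)
          - (2*g*(d⁄dX K g)*P + g^2*(Q*zp)) := by
      simp only [map_sub, Derivation.leibniz, Derivation.leibniz_pow, smul_eq_mul,
        nsmul_eq_mul, hdA, hPQ, Nat.add_sub_cancel]
      push_cast
      ring
    rwa [hexp] at hd
  -- linearized equation with polynomial truncations
  have hC2 : (C (2 : K) : PowerSeries K) = 2 := map_ofNat _ 2
  have hlin' : X ^ (n+1) ∣ 2*A*zp*(d⁄dX K δz) - (2*g*δg*P + g^2*Q*δz) := by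
    have heq : 2*A*zp*(d⁄dX K δz) - (2*g*δg*P + g^2*Q*δz)
        = (C (2 : K) * X * (X - C (4 * a)) * zp * d⁄dX K δz -
            (C (2 : K) * g * δg * V.compSeries z + g ^ 2 * (d⁄dX K V).compSeries z * δz))
          + 2*g*δg*((V.compSeries z) - P) + g^2*((d⁄dX K V).compSeries z - Q)*δz := by
      rw [hC2, hAdef]; ring
    rw [heq]
    exact dvd_add (dvd_add hlin (t2.mul_left _)) ((t3.mul_left _).mul_right _)
  -- the candidate
  set dzh : PowerSeries K := A * zp * g⁻¹ * y with hdzhdef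
  have h1 : g * dzh = A * zp * y := by
    rw [hdzhdef]; linear_combination (A*zp*y)*hG
  have h2 : (d⁄dX K g) * dzh + g * (d⁄dX K dzh)
      = 2*(X - C (2*a))*zp*y + A*(d⁄dX K zp)*y + A*zp*(d⁄dX K y) := by
    have hD := congrArg (d⁄dX K) h1
    simp only [Derivation.leibniz, smul_eq_mul, hdA] at hD
    linear_combination hD
  have hyY : A*(d⁄dX K y) + (X - C (2*a))*y - δg = 0 := by
    linear_combination hy
  have master : g^2 * (2*A*zp*(d⁄dX K dzh) - (2*g*δg*P + g^2*Q*dzh))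
      = 2*A*zp^2*g*(A*(d⁄dX K y) + (X - C (2*a))*y - δg)
        + (2*g*δg - 2*A*(d⁄dX K g)*y) * (A*zp^2 - g^2*P)
        + A*g*y*(2*(X - C (2*a))*zp^2 + 2*A*zp*(d⁄dX K zp)
            - (2*g*(d⁄dX K g)*P + g^2*(Q*zp))) := by
    linear_combination (-(g^3*Q) - 2*A*zp*(d⁄dX K g)) * h1 + (2*A*zp*g) * h2
  have Tdvd : X ^ (n+1) ∣ 2*A*zp*(d⁄dX K dzh) - (2*g*δg*P + g^2*Q*dzh) := by
    have hgT : X ^ (n+1) ∣ g^2 * (2*A*zp*(d⁄dX K dzh) - (2*g*δg*P + g^2*Q*dzh)) := by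
      rw [master, hyY, mul_zero, zero_add]
      apply dvd_add
      · exact E1c.mul_left _
      · have hXE : X ^ (n+1) ∣ X * (2*(X - C (2*a))*zp^2 + 2*A*zp*(d⁄dX K zp)
            - (2*g*(d⁄dX K g)*P + g^2*(Q*zp))) := by
          rw [pow_succ']
          exact mul_dvd_mul_left X E2c
        have heq : A*g*y*(2*(X - C (2*a))*zp^2 + 2*A*zp*(d⁄dX K zp)
              - (2*g*(d⁄dX K g)*P + g^2*(Q*zp)))
            = ((X - C (4*a))*g*y) * (X * (2*(X - C (2*a))*zp^2 + 2*A*zp*(d⁄dX K zp)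
              - (2*g*(d⁄dX K g)*P + g^2*(Q*zp)))) := by
          rw [hAdef]; ring
        rw [heq]
        exact hXE.mul_left _
    have hcan : (g⁻¹)^2 * (g^2 * (2*A*zp*(d⁄dX K dzh) - (2*g*δg*P + g^2*Q*dzh)))
        = 2*A*zp*(d⁄dX K dzh) - (2*g*δg*P + g^2*Q*dzh) := by
      have : (g⁻¹)^2 * (g^2 * (2*A*zp*(d⁄dX K dzh) - (2*g*δg*P + g^2*Q*dzh)))
          = (g*g⁻¹)^2 * (2*A*zp*(d⁄dX K dzh) - (2*g*δg*P + g^2*Q*dzh)) := by ring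
      rw [this, hG, one_pow, one_mul]
    rw [← hcan]
    exact hgT.mul_left _
  -- homogeneous part
  have uhom : X ^ (n+1) ∣ 2 * (A*zp) * d⁄dX K (δz - dzh) - (g^2*Q) * (δz - dzh) := by
    have heq : 2 * (A*zp) * d⁄dX K (δz - dzh) - (g^2*Q) * (δz - dzh)
        = (2*A*zp*(d⁄dX K δz) - (2*g*δg*P + g^2*Q*δz))
          - (2*A*zp*(d⁄dX K dzh) - (2*g*δg*P + g^2*Q*dzh)) := by
      rw [map_sub]; ring
    rw [heq]
    exact dvd_sub hlin' Tdvd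
  -- coefficient facts
  have hA0 : coeff 0 A = 0 := by
    rw [coeff_zero_eq_constantCoeff, hAdef]; simp
  have hA1 : coeff 1 A = -(4*a) := by
    rw [hAdef, aux_coeff_one_mul]
    simp
  have hzp0 : coeff 0 zp = coeff 1 z := by
    rw [hzpdef, coeff_derivative]; simp
  have hz1' : coeff 0 zp ≠ 0 := by
    rwa [coeff_zero_eq_constantCoeff]
  have hP0 : coeff 0 P = 0 := by
    rw [coeff_zero_eq_constantCoeff, hPdef, map_sum]
    apply Finset.sum_eq_zero
    intro k hk
    rcases Nat.eq_zero_or_pos k with hk0 | hk0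
    · subst hk0; simp [hV0]
    · simp [map_mul, map_pow, hz0, zero_pow (by omega : k ≠ 0)]
  have hP1 : coeff 1 P = coeff 1 V * coeff 1 z := by
    rw [hPdef, map_sum, Finset.sum_eq_single 1]
    · rw [coeff_C_mul, pow_one]
    · intro k hk hne
      rw [coeff_C_mul]
      rcases Nat.eq_zero_or_pos k with hk0 | hk0
      · subst hk0; simp
      · have hk2 : 2 ≤ k := by omega
        have : coeff 1 (z ^ k) = 0 := by
          have hdvd : (X : PowerSeries K) ^ k ∣ z ^ k :=
            pow_dvd_pow_of_dvd (X_dvd_iff.mpr hz0) k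
          exact X_pow_dvd_iff.mp hdvd 1 (by omega)
        rw [this, mul_zero]
    · intro hmem; exact absurd (by simp : (1:ℕ) ∈ Finset.range (n+2)) hmem
  have hQ0 : coeff 0 Q = coeff 1 V := by
    rw [hQdef, map_sum, Finset.sum_eq_single 0]
    · rw [coeff_C_mul, coeff_derivative]
      simp
    · intro k hk hne
      rw [coeff_C_mul, coeff_zero_eq_constantCoeff, map_pow, hz0,
        zero_pow hne, mul_zero]
    · intro hmem; exact absurd (by simp : (0:ℕ) ∈ Finset.range (n+1)) hmem
  have hkey : (coeff 0 g)^2 * coeff 1 V = -(4*a) * coeff 0 zp := by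
    have h1c := (X_pow_dvd_iff.mp E1c) 1 (by omega)
    rw [map_sub, aux_coeff_one_mul A (zp^2), aux_coeff_one_mul (g^2) P, hA0, hA1, hP0, hP1] at h1c
    have hzp2 : coeff 0 (zp^2) = (coeff 0 zp)^2 := by
      simp only [coeff_zero_eq_constantCoeff_apply, map_pow]
    have hg2 : coeff 0 (g^2) = (coeff 0 g)^2 := by
      simp only [coeff_zero_eq_constantCoeff_apply, map_pow]
    rw [hzp2, hg2, hzp0] at h1c
    apply mul_right_cancel₀ hz1'
    rw [hzp0]
    linear_combination -h1c
  set β : K := -(4*a) * coeff 0 zp with hβdef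
  have hβ : β ≠ 0 := by
    apply mul_ne_zero _ hz1'
    simp only [neg_ne_zero]
    exact mul_ne_zero (by norm_num) ha
  have hb0 : coeff 0 (A*zp) = 0 := by
    simp only [coeff_zero_eq_constantCoeff_apply, map_mul]
    rw [hAdef]; simp
  have hb1 : coeff 1 (A*zp) = β := by
    rw [aux_coeff_one_mul A zp, hA0, hA1, hβdef]
    ring
  have hc0 : coeff 0 (g^2*Q) = β := by
    have e : coeff 0 (g^2*Q) = (coeff 0 g)^2 * coeff 0 Q := by
      simp only [coeff_zero_eq_constantCoeff_apply, map_mul, map_pow]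
    rw [e, hQ0, hβdef]
    exact hkey
  exact aux_homog n (A*zp) (g^2*Q) (δz - dzh) β hβ hb0 hb1 hc0 uhom
end
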